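/- arXiv:2006.01821 — 8 statements merged into one kernel-verified Lean document; each statement's English description precedes it below -/
import Mathlib

section
/- Let p be a prime and 0 < α < 1, and let β be a real number with α−1 < β < α. Then for every x ∈ ℚ_p with x ≠ 0 the integral ∫_{ℚ_p} (‖x‖_p^β − ‖y‖_p^β) ‖x−y‖_p^{−(1+α)} dm(y) converges absolutely and −(1/Γ_p(−α)) ∫_{ℚ_p} (‖x‖_p^β − ‖y‖_p^β) ‖x−y‖_p^{−(1+α)} dm(y) = (Γ_p(β+1)/Γ_p(β+1−α)) · ‖x‖_p^{β−α}. In other words, 𝔇^α applied to the function x ↦ ‖x‖_p^β equals (Γ_p(β+1)/Γ_p(β+1−α)) ‖x‖_p^{β−α} pointwise on ℚ_p ∖ {0}. -/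
open MeasureTheory

noncomputable def gammaP (p : ℕ) (z : ℝ) : ℝ :=
  (1 - (p : ℝ) ^ (z - 1)) / (1 - (p : ℝ) ^ (-z))

lemma padic_sphere_eq (p : ℕ) [Fact p.Prime] (k : ℤ) :
    {y : ℚ_[p] | ‖y‖ = (p : ℝ) ^ k} =
      Metric.closedBall 0 ((p : ℝ) ^ k) \ Metric.closedBall 0 ((p : ℝ) ^ (k - 1)) := by
  have hp : 1 < (p : ℝ) := by exact_mod_cast (Fact.out : p.Prime).one_lt
  ext y
  simp only [Set.mem_setOf_eq, Set.mem_diff, Metric.mem_closedBall, dist_eq_norm, sub_zero]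
  constructor
  · intro h
    exact ⟨h.le, by rw [h]; exact not_le.mpr (zpow_lt_zpow_right₀ hp (by omega))⟩
  · rintro ⟨h1, h2⟩
    have h3 : ¬ ‖y‖ < (p : ℝ) ^ (k - 1 + 1) :=
      fun hc => h2 ((Padic.norm_le_pow_iff_norm_lt_pow_add_one y (k - 1)).mpr hc)
    rw [sub_add_cancel] at h3
    exact le_antisymm h1 (not_lt.mp h3)

lemma padic_sphere_measure (p : ℕ) [Fact p.Prime] [MeasurableSpace ℚ_[p]] [BorelSpace ℚ_[p]]
    (m : Measure ℚ_[p])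
    (hm : ∀ (x : ℚ_[p]) (k : ℤ),
      m (Metric.closedBall x ((p : ℝ) ^ k)) = ENNReal.ofReal ((p : ℝ) ^ k)) (k : ℤ) :
    m {y : ℚ_[p] | ‖y‖ = (p : ℝ) ^ k} = ENNReal.ofReal ((p : ℝ) ^ k - (p : ℝ) ^ (k - 1)) := by
  have hp : 1 < (p : ℝ) := by exact_mod_cast (Fact.out : p.Prime).one_lt
  have hp0 : (0:ℝ) < p := lt_trans one_pos hp
  rw [padic_sphere_eq, measure_diff (Metric.closedBall_subset_closedBall
      (zpow_le_zpow_right₀ hp.le (by omega))) measurableSet_closedBall.nullMeasurableSet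
      (by rw [hm]; exact ENNReal.ofReal_ne_top), hm, hm,
    ENNReal.ofReal_sub _ (zpow_pos hp0 _).le]

lemma padic_zero_measure (p : ℕ) [Fact p.Prime] [MeasurableSpace ℚ_[p]] [BorelSpace ℚ_[p]]
    (m : Measure ℚ_[p])
    (hm : ∀ (x : ℚ_[p]) (k : ℤ),
      m (Metric.closedBall x ((p : ℝ) ^ k)) = ENNReal.ofReal ((p : ℝ) ^ k)) :
    m {(0 : ℚ_[p])} = 0 := by
  have hp : 1 < (p : ℝ) := by exact_mod_cast (Fact.out : p.Prime).one_lt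
  have hp0 : (0:ℝ) < p := lt_trans one_pos hp
  have hle : ∀ j : ℕ, m {(0 : ℚ_[p])} ≤ ENNReal.ofReal ((p : ℝ) ^ (-(j:ℤ))) := by
    intro j
    rw [← hm 0 (-(j:ℤ))]
    exact measure_mono (by
      intro y hy
      simp only [Set.mem_singleton_iff] at hy
      simp [hy, (zpow_pos hp0 _).le])
  have htend : Filter.Tendsto (fun j : ℕ => ENNReal.ofReal ((p : ℝ) ^ (-(j:ℤ)))) Filter.atTop
      (nhds 0) := by
    have h1 : Filter.Tendsto (fun j : ℕ => ((p:ℝ)⁻¹) ^ j) Filter.atTop (nhds 0) :=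
      tendsto_pow_atTop_nhds_zero_of_lt_one (by positivity) (inv_lt_one_of_one_lt₀ hp)
    have h2 : (fun j : ℕ => ENNReal.ofReal ((p : ℝ) ^ (-(j:ℤ)))) =
        fun j : ℕ => ENNReal.ofReal (((p:ℝ)⁻¹) ^ j) := by
      funext j; rw [zpow_neg, zpow_natCast, inv_pow]
    rw [h2]
    simpa using (ENNReal.tendsto_ofReal h1)
  simpa using ge_of_tendsto' htend hle

lemma norm_sub_of_norm_lt {p : ℕ} [Fact p.Prime] {a b : ℚ_[p]} (h : ‖b‖ < ‖a‖) :
    ‖a - b‖ = ‖a‖ := by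
  apply le_antisymm
  · calc ‖a - b‖ = ‖a + (-b)‖ := by rw [sub_eq_add_neg]
    _ ≤ max ‖a‖ ‖-b‖ := Padic.nonarchimedean a (-b)
    _ ≤ ‖a‖ := by rw [norm_neg]; exact max_le le_rfl h.le
  · have h2 : ‖a‖ ≤ max ‖a - b‖ ‖b‖ := by
      calc ‖a‖ = ‖(a - b) + b‖ := by ring_nf
      _ ≤ max ‖a - b‖ ‖b‖ := Padic.nonarchimedean _ _
    rcases max_cases ‖a - b‖ ‖b‖ with ⟨he, _⟩ | ⟨he, _⟩
    · rwa [he] at h2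
    · rw [he] at h2; exact absurd h2 (not_le.mpr h)

lemma measurable_rpow_comp {E : Type*} [MeasurableSpace E] {g : E → ℝ} (hg : Measurable g)
    (hg0 : ∀ y, 0 ≤ g y) (c : ℝ) : Measurable fun y => g y ^ c := by
  rcases le_or_gt 0 c with h | h
  · exact (Real.continuous_rpow_const h).measurable.comp hg
  · have heq : (fun y => g y ^ c) = fun y => (g y ^ (-c))⁻¹ := by
      funext y; rw [← Real.rpow_neg (hg0 y), neg_neg]
    rw [heq]
    exact ((Real.continuous_rpow_const (by linarith)).measurable.comp hg).inv


set_option maxHeartbeats 1000000 in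
private lemma final_algebra (u v w X : ℝ) (hu : 1 < u) (hw : 1 < w) (hv : 0 < v)
    (hvu : v < u) (hvw : 1 < v * w) (huvw : u < v * w) :
    -(1 / ((1 - u⁻¹ * w⁻¹) / (1 - u))) *
      ((1 - w⁻¹) * X * ((1 - u⁻¹)⁻¹ - (1 - v * u⁻¹)⁻¹) +
       (1 - w⁻¹) * X * (w⁻¹ * (1 - w⁻¹)⁻¹ - v⁻¹ * w⁻¹ * (1 - v⁻¹ * w⁻¹)⁻¹)) =
    (1 - v) / (1 - v⁻¹ * w⁻¹) / ((1 - v * u⁻¹) / (1 - u * (v⁻¹ * w⁻¹))) * X := by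
  have h0u : (0:ℝ) < u := by linarith
  have h0w : (0:ℝ) < w := by linarith
  have hu0 : u ≠ 0 := ne_of_gt h0u
  have hv0 : v ≠ 0 := ne_of_gt hv
  have hw0 : w ≠ 0 := ne_of_gt h0w
  have k1 : (1:ℝ) - u⁻¹ = (u - 1) / u := by field_simp
  have k2 : (1:ℝ) - v * u⁻¹ = (u - v) / u := by field_simp
  have k3 : (1:ℝ) - w⁻¹ = (w - 1) / w := by field_simp
  have k4 : (1:ℝ) - v⁻¹ * w⁻¹ = (v * w - 1) / (v * w) := by field_simp
  have k5 : (1:ℝ) - u⁻¹ * w⁻¹ = (u * w - 1) / (u * w) := by field_simp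
  have k7 : (1:ℝ) - u * (v⁻¹ * w⁻¹) = (v * w - u) / (v * w) := by field_simp
  rw [k1, k2, k3, k4, k5, k7, inv_div, inv_div, inv_div, inv_div]
  have e1 : u - 1 ≠ 0 := ne_of_gt (by linarith)
  have e2 : u - v ≠ 0 := ne_of_gt (by linarith)
  have e3 : w - 1 ≠ 0 := ne_of_gt (by linarith)
  have e4 : v * w - 1 ≠ 0 := ne_of_gt (by linarith)
  have e5 : u * w - 1 ≠ 0 := ne_of_gt (by nlinarith)
  have e6 : v * w - u ≠ 0 := ne_of_gt (by linarith)
  have e7 : (1:ℝ) - u ≠ 0 := ne_of_lt (by linarith)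
  have e8 : -1 + w * v ≠ 0 := by intro h; apply e4; linarith
  have e9 : w * v - 1 ≠ 0 := by intro h; apply e4; linarith
  field_simp
  ring

set_option maxHeartbeats 2000000 in
/-- For `0 < α < 1` and `α - 1 < β < α`, the Taibleson–Vladimirov operator `𝔇^α`
applied to `x ↦ ‖x‖_p^β` is, pointwise on `ℚ_p \ {0}`, given by
`(Γ_p(β+1)/Γ_p(β+1-α)) ‖x‖_p^{β-α}`; the defining integral converges absolutely. -/
theorem Dalpha_of_norm_rpow (p : ℕ) [Fact p.Prime]
    [MeasurableSpace ℚ_[p]] [BorelSpace ℚ_[p]] (m : Measure ℚ_[p])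
    (hm : ∀ (x : ℚ_[p]) (k : ℤ),
      m (Metric.closedBall x ((p : ℝ) ^ k)) = ENNReal.ofReal ((p : ℝ) ^ k))
    (α β : ℝ) (hα0 : 0 < α) (hα1 : α < 1) (hβ1 : α - 1 < β) (hβ2 : β < α)
    (x : ℚ_[p]) (hx : x ≠ 0) :
    Integrable (fun y : ℚ_[p] => (‖x‖ ^ β - ‖y‖ ^ β) * ‖x - y‖ ^ (-(1 + α))) m ∧
    -(1 / gammaP p (-α)) *
        ∫ y : ℚ_[p], (‖x‖ ^ β - ‖y‖ ^ β) * ‖x - y‖ ^ (-(1 + α)) ∂m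
      = (gammaP p (β + 1) / gammaP p (β + 1 - α)) * ‖x‖ ^ (β - α) := by
  have hp : 1 < (p : ℝ) := by exact_mod_cast (Fact.out : p.Prime).one_lt
  have hp0 : (0:ℝ) < p := lt_trans one_pos hp
  set P : ℝ := (p : ℝ) with hP
  set f : ℚ_[p] → ℝ := fun y => (‖x‖ ^ β - ‖y‖ ^ β) * ‖x - y‖ ^ (-(1 + α)) with hfdef
  set n : ℤ := -x.valuation with hn
  have hxn : ‖x‖ = P ^ n := Padic.norm_eq_zpow_neg_valuation hx
  set ν : ℝ := (n : ℝ) with hν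
  have key : ∀ (k : ℤ) (t : ℝ), ((P : ℝ) ^ k) ^ t = P ^ ((k:ℝ) * t) := by
    intro k t; rw [← Real.rpow_intCast P k, ← Real.rpow_mul hp0.le]
  have hsplit : ∀ s t : ℝ, P ^ (s + t) = P ^ s * P ^ t := fun s t => Real.rpow_add hp0 s t
  have hsplit3 : ∀ (a c : ℝ) (j : ℕ), P ^ (a + c * (j:ℝ)) = P ^ a * (P ^ c) ^ j := by
    intro a c j; rw [hsplit, Real.rpow_mul hp0.le, Real.rpow_natCast]
  set s : ℤ → Set ℚ_[p] := fun j => {y : ℚ_[p] | ‖y‖ = P ^ (n + j)} with hs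
  set F : ℤ → ℝ := fun j =>
    (P ^ (ν * β) - P ^ ((ν + (j:ℝ)) * β)) * P ^ (max ν (ν + (j:ℝ)) * (-(1 + α))) with hF
  set T : ℤ → ℝ := fun j => (P ^ (ν + (j:ℝ)) - P ^ (ν + (j:ℝ) - 1)) * F j with hT
  -- measurability
  have hfm : Measurable f := by
    apply Measurable.mul
    · exact measurable_const.sub (measurable_rpow_comp measurable_norm (fun y => norm_nonneg y) β)
    · exact measurable_rpow_comp ((continuous_const.sub continuous_id).measurable.norm)
        (fun y => norm_nonneg _) _
  have hsm : ∀ j, MeasurableSet (s j) := fun j => measurable_norm (measurableSet_singleton _)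
  have hsd : Pairwise (Function.onFun Disjoint s) := by
    intro i j hij
    refine Set.disjoint_left.mpr fun y hyi hyj => hij ?_
    have h1 : P ^ (n + i) = P ^ (n + j) := (Set.mem_setOf_eq ▸ hyi).symm.trans hyj
    have h2 := (zpow_right_strictMono₀ hp).injective h1
    omega
  have hU : (⋃ j, s j) = {(0 : ℚ_[p])}ᶜ := by
    ext y
    simp only [Set.mem_iUnion, Set.mem_compl_iff, Set.mem_singleton_iff, hs, Set.mem_setOf_eq]
    constructor
    · rintro ⟨j, hj⟩ h0
      rw [h0, norm_zero] at hj
      exact absurd hj.symm (ne_of_gt (zpow_pos hp0 _))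
    · intro h0
      exact ⟨-y.valuation - n, by rw [Padic.norm_eq_zpow_neg_valuation h0]; congr 1; ring⟩
  have hrest : m.restrict (⋃ j, s j) = m := by
    rw [hU]
    apply Measure.restrict_eq_self_of_ae_mem
    rw [MeasureTheory.ae_iff]
    simpa [Set.setOf_eq_eq_singleton] using padic_zero_measure p m hm
  have hμnn : ∀ j : ℤ, 0 ≤ P ^ (ν + (j:ℝ)) - P ^ (ν + (j:ℝ) - 1) := fun j =>
    sub_nonneg.mpr (Real.rpow_le_rpow_of_exponent_le hp.le (by linarith))
  have hms : ∀ j : ℤ, m (s j) = ENNReal.ofReal (P ^ (ν + (j:ℝ)) - P ^ (ν + (j:ℝ) - 1)) := by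
    intro j
    have e1 : P ^ (ν + (j:ℝ)) = P ^ (n + j) := by
      rw [show ν + (j:ℝ) = ((n + j : ℤ) : ℝ) by push_cast [hν]; ring, Real.rpow_intCast]
    have e2 : P ^ (ν + (j:ℝ) - 1) = P ^ (n + j - 1) := by
      rw [show ν + (j:ℝ) - 1 = ((n + j - 1 : ℤ) : ℝ) by push_cast [hν]; ring, Real.rpow_intCast]
    rw [e1, e2]
    exact padic_sphere_measure p m hm (n + j)
  -- f equals F j on the sphere s j
  have hfs : ∀ j : ℤ, ∀ y ∈ s j, f y = F j := by
    intro j y hy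
    have hyn : ‖y‖ = P ^ (n + j) := hy
    have hxβ : ‖x‖ ^ β = P ^ (ν * β) := by rw [hxn, key]
    have hyβ : ‖y‖ ^ β = P ^ ((ν + (j:ℝ)) * β) := by
      rw [hyn, key]; congr 1; push_cast [hν]; ring
    rcases lt_trichotomy j 0 with hj | hj | hj
    · have hlt : ‖y‖ < ‖x‖ := by
        rw [hyn, hxn]; exact zpow_lt_zpow_right₀ hp (by omega)
      have hxy : ‖x - y‖ = ‖x‖ := norm_sub_of_norm_lt hlt
      have hmax : max ν (ν + (j:ℝ)) = ν := max_eq_left (by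
        have : (j:ℝ) < 0 := by exact_mod_cast hj
        linarith)
      show (‖x‖ ^ β - ‖y‖ ^ β) * ‖x - y‖ ^ (-(1 + α)) = _
      rw [hxβ, hyβ, hxy, hxn, key, hF]
      simp only [hmax]
      rfl
    · subst hj
      show (‖x‖ ^ β - ‖y‖ ^ β) * ‖x - y‖ ^ (-(1 + α)) = _
      have : ‖y‖ ^ β = ‖x‖ ^ β := by
        rw [hxβ, hyβ]; norm_num
      rw [this, sub_self, zero_mul, hF]
      simp only [Int.cast_zero, add_zero, sub_self, zero_mul]
    · have hlt : ‖x‖ < ‖y‖ := by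
        rw [hyn, hxn]; exact zpow_lt_zpow_right₀ hp (by omega)
      have hxy : ‖x - y‖ = ‖y‖ := by
        rw [show x - y = -(y - x) by ring, norm_neg, norm_sub_of_norm_lt hlt]
      have hmax : max ν (ν + (j:ℝ)) = ν + (j:ℝ) := max_eq_right (by
        have : (0:ℝ) < (j:ℝ) := by exact_mod_cast hj
        linarith)
      show (‖x‖ ^ β - ‖y‖ ^ β) * ‖x - y‖ ^ (-(1 + α)) = _
      rw [hxβ, hyβ, hxy, hyn, key, hF]
      simp only [hmax]
      congr 2
      push_cast [hν]; ring
  -- integral over each sphere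
  have hTj : ∀ j : ℤ, ∫ y in s j, f y ∂m = T j := by
    intro j
    rw [setIntegral_congr_fun (hsm j) (fun y hy => hfs j y hy), setIntegral_const, measureReal_def, hms j,
      ENNReal.toReal_ofReal (hμnn j), smul_eq_mul, hT]
  set C : ℝ := (1 - P⁻¹) * P ^ (ν * (β - α)) with hC
  have E5 : P ^ (ν * (β - α)) = P ^ (ν * β) * P ^ (ν * (-(1 + α))) * P ^ (ν : ℝ) := by
    rw [← hsplit, ← hsplit]; congr 1; ring
  have E8 : P ^ (1:ℝ) = P := Real.rpow_one P
  have E8' : P ^ (-1:ℝ) = P⁻¹ := by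
    rw [show (-1:ℝ) = -(1:ℝ) by norm_num, Real.rpow_neg hp0.le, Real.rpow_one]
  have hnat : ∀ j : ℕ, T (j:ℤ) =
      C * ((P ^ (-α:ℝ)) ^ j - (P ^ (β - α)) ^ j) := by
    intro j
    simp only [hT, hF]
    push_cast
    have hmax : max ν (ν + (j:ℝ)) = ν + (j:ℝ) := max_eq_right (by
      have : (0:ℝ) ≤ (j:ℝ) := by positivity
      linarith)
    have E1 : P ^ (ν + (j:ℝ)) = P ^ ν * (P ^ (1:ℝ)) ^ j := by
      rw [show ν + (j:ℝ) = ν + 1 * (j:ℝ) by ring, hsplit3]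
    have E2 : P ^ (ν + (j:ℝ) - 1) = P ^ ν * (P ^ (1:ℝ)) ^ j * P⁻¹ := by
      rw [show ν + (j:ℝ) - 1 = (ν + 1 * (j:ℝ)) + (-1:ℝ) by ring, hsplit, hsplit3, E8']
    have E3 : P ^ ((ν + (j:ℝ)) * β) = P ^ (ν * β) * (P ^ β) ^ j := by
      rw [show (ν + (j:ℝ)) * β = ν * β + β * (j:ℝ) by ring, hsplit3]
    have E4 : P ^ ((ν + (j:ℝ)) * (-(1 + α))) = P ^ (ν * (-(1+α))) * (P ^ (-(1+α))) ^ j := by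
      rw [show (ν + (j:ℝ)) * (-(1+α)) = ν * (-(1+α)) + (-(1+α)) * (j:ℝ) by ring, hsplit3]
    have E6 : P ^ (-α:ℝ) = P ^ (-(1+α)) * P ^ (1:ℝ) := by rw [← hsplit]; congr 1; ring
    have E7 : P ^ (β - α) = P ^ (-(1+α)) * P ^ (1:ℝ) * P ^ β := by
      rw [← hsplit, ← hsplit]; congr 1; ring
    rw [hmax, E1, E2, E3, E4, E6, E7, hC, E5, E8, mul_pow, mul_pow, mul_pow]
    ring
  have hneg : ∀ j : ℕ, T (-((j:ℤ) + 1)) =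
      C * (P⁻¹ * P⁻¹ ^ j - P ^ (-(β+1)) * (P ^ (-(β+1))) ^ j) := by
    intro j
    simp only [hT, hF]
    push_cast
    have hmax : max ν (ν + -((j:ℝ) + 1)) = ν := max_eq_left (by
      have : (0:ℝ) ≤ (j:ℝ) := by positivity
      linarith)
    have E1 : P ^ (ν + -((j:ℝ) + 1)) = P ^ ν * P ^ (-1:ℝ) * (P ^ (-1:ℝ)) ^ j := by
      rw [show ν + -((j:ℝ) + 1) = (ν + (-1:ℝ)) + (-1) * (j:ℝ) by ring, hsplit3, hsplit]
    have E2 : P ^ (ν + -((j:ℝ) + 1) - 1) =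
        P ^ ν * P ^ (-1:ℝ) * P ^ (-1:ℝ) * (P ^ (-1:ℝ)) ^ j := by
      rw [show ν + -((j:ℝ) + 1) - 1 = ((ν + (-1:ℝ)) + (-1:ℝ)) + (-1) * (j:ℝ) by ring,
        hsplit3, hsplit, hsplit]
    have E3 : P ^ ((ν + -((j:ℝ) + 1)) * β) =
        P ^ (ν * β) * P ^ (-β:ℝ) * (P ^ (-β:ℝ)) ^ j := by
      rw [show (ν + -((j:ℝ) + 1)) * β = (ν * β + (-β)) + (-β) * (j:ℝ) by ring, hsplit3, hsplit]
    have E9 : P ^ (-(β+1)) = P ^ (-β:ℝ) * P ^ (-1:ℝ) := by rw [← hsplit]; congr 1; ring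
    rw [hmax, E1, E2, E3, E9, hC, E5, E8', mul_pow]
    ring
  -- geometric sums
  have hr1a : (0:ℝ) ≤ P ^ (-α:ℝ) := Real.rpow_nonneg hp0.le _
  have hr1b : P ^ (-α:ℝ) < 1 := Real.rpow_lt_one_of_one_lt_of_neg hp (by linarith)
  have hr2a : (0:ℝ) ≤ P ^ (β - α) := Real.rpow_nonneg hp0.le _
  have hr2b : P ^ (β - α) < 1 := Real.rpow_lt_one_of_one_lt_of_neg hp (by linarith)
  have hr3a : (0:ℝ) ≤ P⁻¹ := by positivity
  have hr3b : P⁻¹ < 1 := inv_lt_one_of_one_lt₀ hp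
  have hr4a : (0:ℝ) ≤ P ^ (-(β+1)) := Real.rpow_nonneg hp0.le _
  have hr4b : P ^ (-(β+1)) < 1 := Real.rpow_lt_one_of_one_lt_of_neg hp (by linarith)
  set Sa : ℝ := C * ((1 - P ^ (-α:ℝ))⁻¹ - (1 - P ^ (β - α))⁻¹) with hSa
  set Sb : ℝ := C * (P⁻¹ * (1 - P⁻¹)⁻¹ - P ^ (-(β+1)) * (1 - P ^ (-(β+1)))⁻¹) with hSb
  have hSa' : HasSum (fun j : ℕ => T (j:ℤ)) Sa := by
    have h := ((hasSum_geometric_of_lt_one hr1a hr1b).sub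
      (hasSum_geometric_of_lt_one hr2a hr2b)).mul_left C
    rw [show (fun j : ℕ => T (j:ℤ)) = fun j : ℕ =>
      C * ((P ^ (-α:ℝ)) ^ j - (P ^ (β - α)) ^ j) from funext hnat]
    exact h
  have hSb' : HasSum (fun j : ℕ => T (-((j:ℤ) + 1))) Sb := by
    have h := (((hasSum_geometric_of_lt_one hr3a hr3b).mul_left P⁻¹).sub
      ((hasSum_geometric_of_lt_one hr4a hr4b).mul_left (P ^ (-(β+1))))).mul_left C
    rw [show (fun j : ℕ => T (-((j:ℤ) + 1))) = fun j : ℕ =>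
      C * (P⁻¹ * P⁻¹ ^ j - P ^ (-(β+1)) * (P ^ (-(β+1))) ^ j) from funext hneg]
    exact h
  have hTsum : HasSum T (Sa + Sb) := HasSum.of_nat_of_neg_add_one hSa' hSb'
  have habs : Summable fun j : ℤ => |T j| := hTsum.summable.abs
  -- integrability
  have hint : Integrable f m := by
    rw [← hrest]
    refine ⟨hfm.aestronglyMeasurable.restrict, ?_⟩
    rw [hasFiniteIntegral_iff_norm]
    calc ∫⁻ y in ⋃ j, s j, ENNReal.ofReal ‖f y‖ ∂m
        = ∑' j : ℤ, ∫⁻ y in s j, ENNReal.ofReal ‖f y‖ ∂m := lintegral_iUnion hsm hsd _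
      _ = ∑' j : ℤ, ENNReal.ofReal |T j| := by
          refine tsum_congr fun j => ?_
          rw [setLIntegral_congr_fun_ae (hsm j)
              (MeasureTheory.ae_of_all _ (fun y hy => by rw [hfs j y hy])),
            setLIntegral_const, hms j, ← ENNReal.ofReal_mul (norm_nonneg _)]
          congr 1
          simp only [hT, hF, Real.norm_eq_abs, abs_mul, abs_of_nonneg (hμnn j)]
          ring
      _ = ENNReal.ofReal (∑' j : ℤ, |T j|) :=
          (ENNReal.ofReal_tsum_of_nonneg (fun j => abs_nonneg _) habs).symm
      _ < ⊤ := ENNReal.ofReal_lt_top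
  -- value of the integral
  have hIval : ∫ y, f y ∂m = Sa + Sb := by
    have hion : IntegrableOn f (⋃ j, s j) m := by
      show Integrable f (m.restrict _)
      rw [hrest]; exact hint
    calc ∫ y, f y ∂m = ∫ y in ⋃ j, s j, f y ∂m := by rw [hrest]
      _ = ∑' j : ℤ, ∫ y in s j, f y ∂m := integral_iUnion hsm hsd hion
      _ = ∑' j : ℤ, T j := tsum_congr hTj
      _ = Sa + Sb := hTsum.tsum_eq
  -- final algebraic identity
  refine ⟨hint, ?_⟩
  rw [hIval, hxn, key, ← hν]
  have hA1 : 1 < P ^ α := (Real.one_lt_rpow_iff_of_pos hp0).mpr (Or.inl ⟨hp, hα0⟩)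
  have hA0 : (0:ℝ) < P ^ α := Real.rpow_pos_of_pos hp0 α
  have hB0 : (0:ℝ) < P ^ β := Real.rpow_pos_of_pos hp0 β
  have hBA : P ^ β < P ^ α := (Real.rpow_lt_rpow_left_iff hp).mpr hβ2
  have hβ1' : 1 < P ^ β * P := by
    have h := (Real.one_lt_rpow_iff_of_pos hp0 (y := β + 1)).mpr (Or.inl ⟨hp, by linarith⟩)
    rwa [hsplit β 1, Real.rpow_one] at h
  have hα1' : 1 < P ^ α * P := by
    have h := (Real.one_lt_rpow_iff_of_pos hp0 (y := α + 1)).mpr (Or.inl ⟨hp, by linarith⟩)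
    rwa [hsplit α 1, Real.rpow_one] at h
  have hinvα : P ^ (-α:ℝ) = (P ^ α)⁻¹ := Real.rpow_neg hp0.le α
  have hinvβ : P ^ (-β:ℝ) = (P ^ β)⁻¹ := Real.rpow_neg hp0.le β
  have huvw : P ^ α < P ^ β * P := by
    have h := (Real.rpow_lt_rpow_left_iff (y := α) hp).mpr (show α < β + 1 by linarith)
    rwa [hsplit β 1, Real.rpow_one] at h
  simp only [hSa, hSb, hC, gammaP]
  rw [← hP]
  rw [neg_neg,
    show (-α - 1 : ℝ) = -α + -1 by ring,
    show (β + 1 - 1 : ℝ) = β by ring,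
    show (β + 1 - α - 1 : ℝ) = β + -α by ring,
    show (-(β + 1) : ℝ) = -β + -1 by ring,
    show (-(β + 1 - α) : ℝ) = α + (-β + -1) by ring,
    show (β - α : ℝ) = β + -α by ring]
  simp only [hsplit, hinvα, hinvβ, E8']
  exact final_algebra (P ^ α) (P ^ β) P (P ^ (ν * (β + -α))) hA1 hp hB0 hBA hβ1' huvw
end

section
/- Let p be a prime and α > 0. Suppose f : ℚ_p → ℝ is locally constant with f(x) > 0 for all x, and for every x ∈ ℚ_p the integral ∫_{ℚ_p} |f(x)−f(y)| ‖x−y‖_p^{−(1+α)} dm(y) is finite, so that (𝔇^α f)(x) is defined pointwise. Let V : ℚ_p → ℝ be measurable and locally integrable with V(x) ≥ −(𝔇^α f)(x)/f(x) for m-almost every x. Then for every locally constant compactly supported function φ : ℚ_p → ℝ one has Q_α(φ) + ∫_{ℚ_p} V(x) φ(x)² dm(x) ≥ 0. -/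
open MeasureTheory Metric Set
open scoped ENNReal NNReal
set_option linter.unusedSectionVars false
set_option maxHeartbeats 1000000

/-- The Taibleson–Vladimirov operator `𝔇^α`, pointwise:
`(𝔇^α f)(x) = -(1/Γ_p(-α)) ∫ (f(x)-f(y)) ‖x-y‖_p^{-(1+α)} dm(y)`. -/
noncomputable def Dop (p : ℕ) [Fact p.Prime] [MeasurableSpace ℚ_[p]]
    (m : Measure ℚ_[p]) (α : ℝ) (f : ℚ_[p] → ℝ) (x : ℚ_[p]) : ℝ :=
  -(1 / gammaP p (-α)) * ∫ y : ℚ_[p], (f x - f y) * ‖x - y‖ ^ (-(1 + α)) ∂m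

/-- The Dirichlet form `Q_α` of the Taibleson–Vladimirov operator `𝔇^α`. -/
noncomputable def Qform (p : ℕ) [Fact p.Prime] [MeasurableSpace ℚ_[p]]
    (m : Measure ℚ_[p]) (α : ℝ) (φ : ℚ_[p] → ℝ) : ℝ :=
  -(1 / (2 * gammaP p (-α))) *
    ∫ q : ℚ_[p] × ℚ_[p], (φ q.1 - φ q.2) ^ 2 * ‖q.1 - q.2‖ ^ (-(1 + α)) ∂(m.prod m)

namespace APaux


variable {p : ℕ} [hp : Fact p.Prime] [MeasurableSpace ℚ_[p]] [BorelSpace ℚ_[p]]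
variable {m : Measure ℚ_[p]} {α : ℝ}

lemma one_lt_p : (1:ℝ) < p := by exact_mod_cast hp.out.one_lt

lemma p_pos : (0:ℝ) < p := lt_trans one_pos one_lt_p

lemma norm_sub_eq_of_lt {x x₀ y : ℚ_[p]} (h : ‖x - x₀‖ < ‖x₀ - y‖) : ‖x - y‖ = ‖x₀ - y‖ := by
  have h1 : ‖x - y‖ ≤ max ‖x - x₀‖ ‖x₀ - y‖ := by
    simpa [sub_add_sub_cancel] using Padic.nonarchimedean (x - x₀) (x₀ - y)
  have h2 : ‖x₀ - y‖ ≤ max ‖x₀ - x‖ ‖x - y‖ := by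
    simpa [sub_add_sub_cancel] using Padic.nonarchimedean (x₀ - x) (x - y)
  refine le_antisymm (h1.trans (max_le h.le le_rfl)) ?_
  rcases max_cases ‖x₀ - x‖ ‖x - y‖ with ⟨hmax, hle⟩ | ⟨hmax, hle⟩
  · exfalso
    rw [hmax] at h2
    rw [norm_sub_rev x₀ x] at h2
    exact absurd (lt_of_le_of_lt h2 h) (lt_irrefl _)
  · rwa [hmax] at h2

lemma finiteOnCompacts (hm : ∀ (x : ℚ_[p]) (k : ℤ),
      m (Metric.closedBall x ((p : ℝ) ^ k)) = ENNReal.ofReal ((p : ℝ) ^ k)) :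
    IsFiniteMeasureOnCompacts m := by
  constructor
  intro K hK
  obtain ⟨R, hR⟩ : ∃ R, K ⊆ closedBall (0:ℚ_[p]) R := hK.isBounded.subset_closedBall 0
  obtain ⟨n, hn⟩ := pow_unbounded_of_one_lt R (one_lt_p (p := p))
  have hsub : K ⊆ closedBall (0:ℚ_[p]) ((p:ℝ)^(n:ℤ)) := by
    refine hR.trans (closedBall_subset_closedBall ?_)
    rw [zpow_natCast]; exact hn.le
  calc m K ≤ m (closedBall (0:ℚ_[p]) ((p:ℝ)^(n:ℤ))) := measure_mono hsub
    _ < ⊤ := by rw [hm]; exact ENNReal.ofReal_lt_top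

lemma sigmaFinite (hm : ∀ (x : ℚ_[p]) (k : ℤ),
      m (Metric.closedBall x ((p : ℝ) ^ k)) = ENNReal.ofReal ((p : ℝ) ^ k)) :
    SigmaFinite m := by
  refine ⟨⟨⟨fun n => closedBall (0:ℚ_[p]) ((p:ℝ)^(n:ℤ)), fun _ => trivial, ?_, ?_⟩⟩⟩
  · intro n; rw [hm]; exact ENNReal.ofReal_lt_top
  · apply eq_univ_of_forall
    intro x
    obtain ⟨n, hn⟩ := pow_unbounded_of_one_lt ‖x‖ (one_lt_p (p := p))
    refine mem_iUnion.2 ⟨n, ?_⟩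
    simp only [mem_closedBall, dist_eq_norm, sub_zero, zpow_natCast]
    exact hn.le




/-- Uniform bound on the tail lintegral, independent of the center `x`. -/
lemma tail_bound (hm : ∀ (x : ℚ_[p]) (k : ℤ),
      m (Metric.closedBall x ((p : ℝ) ^ k)) = ENNReal.ofReal ((p : ℝ) ^ k))
    (hα0 : 0 < α) (N : ℤ) :
    ∃ C : ℝ≥0∞, C < ⊤ ∧ ∀ x : ℚ_[p],
      (∫⁻ y, (nnnorm (Set.indicator {y : ℚ_[p] | (p:ℝ)^N < ‖x - y‖}
        (fun y => ‖x - y‖ ^ (-(1+α))) y) : ENNReal) ∂m) ≤ C := by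
  have hp1 : (1:ℝ) < p := one_lt_p
  have hp0 : (0:ℝ) < p := p_pos
  -- the geometric series
  set a : ℕ → ℝ := fun i =>
    ((p:ℝ) ^ (N + 1 + (i:ℤ))) ^ (-(1+α)) * (p:ℝ) ^ (N + 1 + (i:ℤ)) with ha
  have ha_eq : ∀ i : ℕ, a i = (p:ℝ) ^ (((N:ℝ) + 1) * (-α)) * ((p:ℝ) ^ (-α)) ^ i := by
    intro i
    have h1 : ((p:ℝ) ^ (N + 1 + (i:ℤ))) = (p:ℝ) ^ (((N + 1 + (i:ℤ) : ℤ) : ℝ)) := by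
      rw [Real.rpow_intCast]
    rw [ha]
    simp only
    rw [h1, ← Real.rpow_natCast ((p:ℝ) ^ (-α)) i, ← Real.rpow_mul hp0.le,
      ← Real.rpow_mul hp0.le, ← Real.rpow_add hp0, ← Real.rpow_add hp0]
    congr 1
    push_cast
    ring
  have hsummable : Summable a := by
    have h0 : (0:ℝ) ≤ (p:ℝ) ^ (-α) := Real.rpow_nonneg hp0.le _
    have h1 : (p:ℝ) ^ (-α) < 1 :=
      Real.rpow_lt_one_of_one_lt_of_neg hp1 (by linarith)
    have := (summable_geometric_of_lt_one h0 h1).mul_left ((p:ℝ) ^ (((N:ℝ) + 1) * (-α)))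
    exact (summable_congr (fun i => (ha_eq i))).2 this
  have ha_nonneg : ∀ i, 0 ≤ a i := fun i =>
    mul_nonneg (Real.rpow_nonneg (zpow_nonneg hp0.le _) _) (zpow_nonneg hp0.le _)
  refine ⟨ENNReal.ofReal (∑' i, a i), ENNReal.ofReal_lt_top, fun x => ?_⟩
  set S : ℕ → Set ℚ_[p] := fun i => {y | ‖x - y‖ = (p:ℝ)^(N + 1 + (i:ℤ))} with hS
  have hSmeas : ∀ i, MeasurableSet (S i) := by
    intro i
    exact (isClosed_eq ((continuous_const.sub continuous_id).norm) continuous_const).measurableSet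
  have hSdisj : Pairwise (Function.onFun Disjoint S) := by
    intro i j hij
    refine Set.disjoint_left.2 fun y hyi hyj => ?_
    have : (p:ℝ)^(N + 1 + (i:ℤ)) = (p:ℝ)^(N + 1 + (j:ℤ)) := by
      rw [← hyi, hyj]
    have hij' : (N + 1 + (i:ℤ)) = (N + 1 + (j:ℤ)) := zpow_right_injective₀ hp0 (ne_of_gt hp1) this
    exact hij (by omega)
  set U : Set ℚ_[p] := {y : ℚ_[p] | (p:ℝ)^N < ‖x - y‖} with hUdef
  have hUmeas : MeasurableSet U :=
    (isOpen_lt continuous_const ((continuous_const.sub continuous_id).norm)).measurableSet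
  have hUeq : U = ⋃ i, S i := by
    ext y
    simp only [hUdef, hS, mem_setOf_eq, mem_iUnion]
    constructor
    · intro hy
      have hxy : x - y ≠ 0 := by
        intro h0
        rw [h0, norm_zero] at hy
        exact absurd hy (not_lt.2 (zpow_pos hp0 N).le)
      obtain ⟨j, hj⟩ : ∃ j : ℤ, ‖x - y‖ = (p:ℝ)^j :=
        ⟨-(x-y).valuation, Padic.norm_eq_zpow_neg_valuation hxy⟩
      have hNj : N < j := by
        rw [hj] at hy
        exact (zpow_lt_zpow_iff_right₀ hp1).1 hy
      refine ⟨(j - (N+1)).toNat, ?_⟩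
      rw [hj]
      congr 1
      omega
    · rintro ⟨i, hi⟩
      rw [hi]
      exact zpow_lt_zpow_right₀ hp1 (by omega)
  have hnn : ∀ y : ℚ_[p], ((nnnorm (Set.indicator U (fun y => ‖x - y‖ ^ (-(1+α))) y)) : ℝ≥0∞)
      = Set.indicator U (fun y => ENNReal.ofReal (‖x - y‖ ^ (-(1+α)))) y := by
    intro y
    by_cases hy : y ∈ U
    · rw [Set.indicator_of_mem hy, Set.indicator_of_mem hy]
      exact Real.enorm_eq_ofReal (Real.rpow_nonneg (norm_nonneg _) _)
    · rw [Set.indicator_of_notMem hy, Set.indicator_of_notMem hy]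
      simp
  have hshell : ∀ i : ℕ, (∫⁻ y in S i, ENNReal.ofReal (‖x - y‖ ^ (-(1+α))) ∂m)
      ≤ ENNReal.ofReal (a i) := by
    intro i
    have hconst : (∫⁻ y in S i, ENNReal.ofReal (‖x - y‖ ^ (-(1+α))) ∂m)
        = ENNReal.ofReal (((p:ℝ) ^ (N+1+(i:ℤ))) ^ (-(1+α))) * m (S i) := by
      rw [setLIntegral_congr_fun (hSmeas i)
        (fun y (hy : ‖x - y‖ = (p:ℝ)^(N+1+(i:ℤ))) => by rw [hy])]
      exact setLIntegral_const _ _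
    have hmS : m (S i) ≤ ENNReal.ofReal ((p:ℝ) ^ (N+1+(i:ℤ))) := by
      refine le_trans (measure_mono ?_) (le_of_eq (hm x _))
      intro y hy
      have hy' : ‖x - y‖ = (p:ℝ)^(N+1+(i:ℤ)) := hy
      simp only [mem_closedBall, dist_eq_norm]
      rw [norm_sub_rev, hy']
    rw [hconst, ha]
    simp only
    rw [ENNReal.ofReal_mul (Real.rpow_nonneg (zpow_nonneg hp0.le _) _)]
    exact mul_le_mul_right hmS _
  calc (∫⁻ y, ((nnnorm (Set.indicator U (fun y => ‖x - y‖ ^ (-(1+α))) y)) : ℝ≥0∞) ∂m)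
      = ∫⁻ y, Set.indicator U (fun y => ENNReal.ofReal (‖x - y‖ ^ (-(1+α)))) y ∂m := by
        exact lintegral_congr hnn
    _ = ∫⁻ y in U, ENNReal.ofReal (‖x - y‖ ^ (-(1+α))) ∂m := lintegral_indicator hUmeas _
    _ = ∑' i, ∫⁻ y in S i, ENNReal.ofReal (‖x - y‖ ^ (-(1+α))) ∂m := by
        rw [hUeq, lintegral_iUnion hSmeas hSdisj]
    _ ≤ ∑' i, ENNReal.ofReal (a i) := ENNReal.tsum_le_tsum hshell
    _ = ENNReal.ofReal (∑' i, a i) := (ENNReal.ofReal_tsum_of_nonneg ha_nonneg hsummable).symm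



/-- A locally constant function is constant on a small closed ball of radius `p^k`. -/
lemma exists_ball_const {f : ℚ_[p] → ℝ} (hfl : IsLocallyConstant f) (x₀ : ℚ_[p]) :
    ∃ k : ℤ, ∀ z ∈ closedBall x₀ ((p:ℝ)^k), f z = f x₀ := by
  have hopen : IsOpen (f ⁻¹' {f x₀}) := hfl {f x₀}
  obtain ⟨ε, hε, hball⟩ := Metric.isOpen_iff.1 hopen x₀ rfl
  obtain ⟨n, hn⟩ := pow_unbounded_of_one_lt (1/ε) (one_lt_p (p := p))
  refine ⟨-(n:ℤ), fun z hz => ?_⟩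
  have hlt : (p:ℝ)^(-(n:ℤ)) < ε := by
    rw [zpow_neg, zpow_natCast]
    rw [inv_lt_comm₀ (pow_pos p_pos n) hε]
    rwa [one_div] at hn
  have : z ∈ ball x₀ ε := lt_of_le_of_lt (mem_closedBall.1 hz) hlt
  exact hball this

/-- Transfer principle: integrands of the Taibleson–Vladimirov type are constant in the
center variable on balls where `f` is constant. -/
lemma transfer {f : ℚ_[p] → ℝ} {x₀ : ℚ_[p]} {k : ℤ}
    (hb : ∀ z ∈ closedBall x₀ ((p:ℝ)^k), f z = f x₀)
    {x : ℚ_[p]} (hx : x ∈ closedBall x₀ ((p:ℝ)^k)) (g : ℝ → ℝ) (hg : g 0 = 0) (y : ℚ_[p]) :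
    g (f x - f y) * ‖x - y‖ ^ (-(1+α)) = g (f x₀ - f y) * ‖x₀ - y‖ ^ (-(1+α)) := by
  by_cases hy : y ∈ closedBall x₀ ((p:ℝ)^k)
  · rw [hb x hx, hb y hy]
    simp [hg]
  · have h1 : f x = f x₀ := hb x hx
    have h2 : ‖x - y‖ = ‖x₀ - y‖ := by
      apply norm_sub_eq_of_lt
      have hxx : ‖x - x₀‖ ≤ (p:ℝ)^k := by
        rw [← dist_eq_norm]; exact mem_closedBall.1 hx
      have hyy : (p:ℝ)^k < ‖x₀ - y‖ := by
        rw [norm_sub_rev, ← dist_eq_norm]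
        exact lt_of_not_ge (fun h => hy (mem_closedBall.2 h))
      exact lt_of_le_of_lt hxx hyy
    rw [h1, h2]

/-- Continuity (in fact local constancy) of integrals of Taibleson–Vladimirov type. -/
lemma integral_transfer_cont {f : ℚ_[p] → ℝ} (hfl : IsLocallyConstant f)
    (g : ℝ → ℝ) (hg : g 0 = 0) :
    Continuous (fun x => ∫ y, g (f x - f y) * ‖x - y‖ ^ (-(1+α)) ∂m) := by
  rw [continuous_iff_continuousAt]
  intro x₀
  obtain ⟨k, hb⟩ := exists_ball_const hfl x₀
  refine Filter.EventuallyEq.continuousAt (y := ∫ y, g (f x₀ - f y) * ‖x₀ - y‖ ^ (-(1+α)) ∂m) ?_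
  have hmem : closedBall x₀ ((p:ℝ)^k) ∈ nhds x₀ :=
    closedBall_mem_nhds x₀ (zpow_pos p_pos k)
  refine Filter.eventuallyEq_of_mem hmem (fun x hx => ?_)
  exact integral_congr_ae (Filter.Eventually.of_forall (fun y => transfer hb hx g hg y))

/-- A compactly supported locally constant function is uniformly locally constant. -/
lemma exists_uniform {φ : ℚ_[p] → ℝ} (hφ : IsLocallyConstant φ) (hφc : HasCompactSupport φ) :
    ∃ N : ℤ, ∀ x y : ℚ_[p], ‖x - y‖ ≤ (p:ℝ)^N → φ x = φ y := by
  classical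
  choose k hk using fun x => exists_ball_const hφ x
  have hcover : ∀ x ∈ tsupport φ, closedBall x ((p:ℝ)^(k x)) ∈ nhds x :=
    fun x _ => closedBall_mem_nhds x (zpow_pos p_pos (k x))
  obtain ⟨t, htmem, ht⟩ := hφc.elim_nhds_subcover (fun x => closedBall x ((p:ℝ)^(k x)))
    (fun x hx => hcover x hx)
  by_cases hne : t.Nonempty
  · refine ⟨t.inf' hne k, ?_⟩
    have key : ∀ x y : ℚ_[p], x ∈ tsupport φ → ‖x - y‖ ≤ (p:ℝ)^(t.inf' hne k) → φ x = φ y := by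
      intro x y hxK hxy
      obtain ⟨c, hct, hxc⟩ := Set.mem_iUnion₂.1 (ht hxK)
      have hNc : (p:ℝ)^(t.inf' hne k) ≤ (p:ℝ)^(k c) :=
        zpow_le_zpow_right₀ one_lt_p.le (Finset.inf'_le k hct)
      have hyc : y ∈ closedBall c ((p:ℝ)^(k c)) := by
        have h1 : ‖y - c‖ ≤ max ‖y - x‖ ‖x - c‖ := by
          simpa [sub_add_sub_cancel] using Padic.nonarchimedean (y - x) (x - c)
        rw [mem_closedBall, dist_eq_norm]
        refine h1.trans (max_le ?_ ?_)
        · rw [norm_sub_rev]; exact hxy.trans hNc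
        · rw [← dist_eq_norm]; exact mem_closedBall.1 hxc
      rw [hk c x hxc, hk c y hyc]
    intro x y hxy
    by_cases hx : x ∈ tsupport φ
    · exact key x y hx hxy
    · by_cases hy : y ∈ tsupport φ
      · exact (key y x hy (by rwa [norm_sub_rev])).symm
      · rw [image_eq_zero_of_notMem_tsupport hx, image_eq_zero_of_notMem_tsupport hy]
  · refine ⟨0, fun x y _ => ?_⟩
    have hK : tsupport φ = ∅ := by
      rw [Finset.not_nonempty_iff_eq_empty] at hne
      subst hne
      simpa using subset_empty_iff.1 (by simpa using ht)
    have hzero : ∀ z : ℚ_[p], φ z = 0 := fun z =>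
      image_eq_zero_of_notMem_tsupport (by simp [hK])
    rw [hzero x, hzero y]



end APaux

/-- Allegretto–Piepenbrink-type criterion: if there is a positive locally constant
function `f` with `(𝔇^α f)(x)` defined pointwise such that `V ≥ -(𝔇^α f)/f` a.e.,
then the Schrödinger form `Q_α + ∫ V φ²` is non-negative on test functions. -/
theorem schroedinger_form_nonneg_of_supersolution (p : ℕ) [Fact p.Prime]
    [MeasurableSpace ℚ_[p]] [BorelSpace ℚ_[p]] (m : Measure ℚ_[p])
    (hm : ∀ (x : ℚ_[p]) (k : ℤ),
      m (Metric.closedBall x ((p : ℝ) ^ k)) = ENNReal.ofReal ((p : ℝ) ^ k))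
    (α : ℝ) (hα0 : 0 < α)
    (f : ℚ_[p] → ℝ) (hfl : IsLocallyConstant f) (hfpos : ∀ x, 0 < f x)
    (hfint : ∀ x : ℚ_[p],
      Integrable (fun y : ℚ_[p] => |f x - f y| * ‖x - y‖ ^ (-(1 + α))) m)
    (V : ℚ_[p] → ℝ) (hVmeas : Measurable V) (hVloc : LocallyIntegrable V m)
    (hV : ∀ᵐ x ∂m, V x ≥ -(Dop p m α f x) / f x)
    (φ : ℚ_[p] → ℝ) (hφ : IsLocallyConstant φ) (hφc : HasCompactSupport φ) :
    0 ≤ Qform p m α φ + ∫ x : ℚ_[p], V x * φ x ^ 2 ∂m := by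
  classical
  haveI hFC : IsFiniteMeasureOnCompacts m := APaux.finiteOnCompacts hm
  haveI hSF : SigmaFinite m := APaux.sigmaFinite hm
  have hp1 : (1:ℝ) < p := APaux.one_lt_p
  have hp0 : (0:ℝ) < p := APaux.p_pos
  -- `Γ_p(-α) < 0` and the positive weight `w`
  have hγ : gammaP p (-α) < 0 := by
    unfold gammaP
    apply div_neg_of_pos_of_neg
    · have h1 : (p:ℝ) ^ (-α - 1) < 1 :=
        Real.rpow_lt_one_of_one_lt_of_neg hp1 (by linarith)
      linarith
    · have h2 : (1:ℝ) < (p:ℝ) ^ (-(-α)) := by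
        rw [neg_neg]
        exact (Real.one_lt_rpow_iff_of_pos hp0).2 (Or.inl ⟨hp1, hα0⟩)
      linarith
  set w : ℝ := -(1 / gammaP p (-α)) with hw
  have hw0 : 0 < w := by
    rw [hw]
    have : 1 / gammaP p (-α) < 0 := div_neg_of_pos_of_neg one_pos hγ
    linarith
  -- the kernel
  set k : ℚ_[p] × ℚ_[p] → ℝ := fun q => ‖q.1 - q.2‖ ^ (-(1+α)) with hk
  have hknn : ∀ q, 0 ≤ k q := fun q => Real.rpow_nonneg (norm_nonneg _) _
  have hkmeas : Measurable k :=
    ((measurable_fst.sub measurable_snd).norm).pow measurable_const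
  have hkswap : ∀ q : ℚ_[p] × ℚ_[p], k q.swap = k q := by
    intro q
    simp only [hk, Prod.fst_swap, Prod.snd_swap, norm_sub_rev]
  have hφcont : Continuous φ := hφ.continuous
  have hfcont : Continuous f := hfl.continuous
  set K := tsupport φ with hKdef
  have hKc : IsCompact K := hφc
  have hKclosed : IsClosed K := isClosed_tsupport φ
  obtain ⟨N, hN⟩ := APaux.exists_uniform hφ hφc
  obtain ⟨Cφ, hCφ⟩ := hφc.exists_bound_of_continuous hφcont
  obtain ⟨C0, hC0top, hC0⟩ := APaux.tail_bound (m := m) hm hα0 N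
  -- the dominating function for `G`
  set T : Set (ℚ_[p] × ℚ_[p]) := {q | q.1 ∈ K ∧ (p:ℝ)^N < ‖q.1 - q.2‖} with hT
  have hTmeas : MeasurableSet T := by
    have h1 : MeasurableSet {q : ℚ_[p] × ℚ_[p] | q.1 ∈ K} :=
      hKclosed.measurableSet.preimage measurable_fst
    have h2 : MeasurableSet {q : ℚ_[p] × ℚ_[p] | (p:ℝ)^N < ‖q.1 - q.2‖} :=
      (isOpen_lt continuous_const ((continuous_fst.sub continuous_snd).norm)).measurableSet
    exact h1.inter h2
  have h₁meas : Measurable (T.indicator k) := hkmeas.indicator hTmeas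
  have hsec : ∀ x : ℚ_[p], Integrable (fun y => T.indicator k (x, y)) m ∧
      (∫ y, ‖T.indicator k (x, y)‖ ∂m) ≤ K.indicator (fun _ => C0.toReal) x := by
    intro x
    by_cases hx : x ∈ K
    · have heq : (fun y => T.indicator k (x, y))
          = fun y => Set.indicator {y : ℚ_[p] | (p:ℝ)^N < ‖x - y‖}
              (fun y => ‖x - y‖ ^ (-(1+α))) y := by
        funext y
        by_cases hy : (p:ℝ)^N < ‖x - y‖
        · rw [Set.indicator_of_mem (show (x,y) ∈ T from ⟨hx, hy⟩),
            Set.indicator_of_mem (show y ∈ {y : ℚ_[p] | (p:ℝ)^N < ‖x - y‖} from hy)]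
        · rw [Set.indicator_of_notMem (show (x,y) ∉ T from fun hq => hy hq.2),
            Set.indicator_of_notMem (show y ∉ {y : ℚ_[p] | (p:ℝ)^N < ‖x - y‖} from hy)]
      have hmeas' : Measurable fun y => Set.indicator {y : ℚ_[p] | (p:ℝ)^N < ‖x - y‖}
          (fun y : ℚ_[p] => ‖x - y‖ ^ (-(1+α))) y := by
        refine Measurable.indicator ?_ ?_
        · exact ((continuous_const.sub continuous_id).norm.measurable).pow measurable_const
        · exact (isOpen_lt continuous_const
            ((continuous_const.sub continuous_id).norm)).measurableSet
      have hint : Integrable (fun y => Set.indicator {y : ℚ_[p] | (p:ℝ)^N < ‖x - y‖}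
          (fun y : ℚ_[p] => ‖x - y‖ ^ (-(1+α))) y) m :=
        ⟨hmeas'.aestronglyMeasurable, lt_of_le_of_lt (hC0 x) hC0top⟩
      have heq' : ∀ y : ℚ_[p], T.indicator k (x, y)
          = Set.indicator {y : ℚ_[p] | (p:ℝ)^N < ‖x - y‖}
              (fun y => ‖x - y‖ ^ (-(1+α))) y := fun y => congrFun heq y
      refine ⟨heq ▸ hint, ?_⟩
      rw [Set.indicator_of_mem hx]
      calc (∫ y, ‖T.indicator k (x, y)‖ ∂m)
          = ∫ y, ‖Set.indicator {y : ℚ_[p] | (p:ℝ)^N < ‖x - y‖}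
              (fun y => ‖x - y‖ ^ (-(1+α))) y‖ ∂m := by simp only [heq']
        _ ≤ C0.toReal := by
            rw [integral_norm_eq_lintegral_enorm hint.aestronglyMeasurable]
            exact ENNReal.toReal_mono hC0top.ne (hC0 x)
    · have heq : ∀ y, T.indicator k (x, y) = (0:ℝ) := fun y =>
        Set.indicator_of_notMem (fun hq => hx hq.1) _
      constructor
      · have : Integrable (fun _ : ℚ_[p] => (0:ℝ)) m := integrable_zero _ _ _
        exact this.congr (Filter.Eventually.of_forall (fun y => (heq y).symm))
      · simp only [heq, norm_zero, integral_zero]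
        rw [Set.indicator_of_notMem hx]
  have h₁int : Integrable (T.indicator k) (m.prod m) := by
    refine (integrable_prod_iff h₁meas.aestronglyMeasurable).2 ⟨?_, ?_⟩
    · exact Filter.Eventually.of_forall (fun x => (hsec x).1)
    · refine Integrable.mono' (g := K.indicator fun _ => C0.toReal) ?_ ?_ ?_
      · exact (integrable_indicator_iff hKclosed.measurableSet).2
          (integrableOn_const hKc.measure_lt_top.ne)
      · exact (h₁meas.norm.aestronglyMeasurable).integral_prod_right'
      · refine Filter.Eventually.of_forall (fun x => ?_)
        rw [Real.norm_eq_abs, abs_of_nonneg (integral_nonneg (fun y => norm_nonneg _))]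
        exact (hsec x).2
  have h₂int : Integrable (fun q : ℚ_[p] × ℚ_[p] => T.indicator k q.swap) (m.prod m) := by
    have := (Measure.measurePreserving_swap (μ := m) (ν := m)).integrable_comp
      h₁meas.aestronglyMeasurable
    exact this.2 h₁int
  -- integrability of `G`
  set G : ℚ_[p] × ℚ_[p] → ℝ := fun q => (φ q.1 - φ q.2)^2 * k q with hG
  have hGmeas : Measurable G :=
      ((((hφcont.comp continuous_fst).sub (hφcont.comp continuous_snd)).measurable).pow
      measurable_const).mul hkmeas
  have hGbound : ∀ q : ℚ_[p] × ℚ_[p],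
      ‖G q‖ ≤ (2*Cφ)^2 * (T.indicator k q + T.indicator k q.swap) := by
    intro q
    have hCφ0 : 0 ≤ Cφ := le_trans (norm_nonneg _) (hCφ q.1)
    have hind1 : 0 ≤ T.indicator k q := Set.indicator_apply_nonneg (fun _ => hknn _)
    have hind2 : 0 ≤ T.indicator k q.swap := Set.indicator_apply_nonneg (fun _ => hknn _)
    have hGabs : ‖G q‖ = (φ q.1 - φ q.2)^2 * k q := by
      rw [Real.norm_eq_abs, abs_mul, abs_of_nonneg (hknn q), abs_of_nonneg (sq_nonneg _)]
    by_cases hφq : φ q.1 = φ q.2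
    · rw [hGabs, hφq]
      simp only [sub_self, ne_eq, OfNat.ofNat_ne_zero, not_false_eq_true, zero_pow, zero_mul]
      positivity
    · have hnorm : (p:ℝ)^N < ‖q.1 - q.2‖ := lt_of_not_ge fun h => hφq (hN _ _ h)
      have hsq : (φ q.1 - φ q.2)^2 ≤ (2*Cφ)^2 := by
        have h1 := hCφ q.1
        have h2 := hCφ q.2
        rw [Real.norm_eq_abs] at h1 h2
        have := abs_sub (φ q.1) (φ q.2)
        nlinarith [sq_nonneg (φ q.1 - φ q.2), abs_nonneg (φ q.1 - φ q.2),
          sq_abs (φ q.1 - φ q.2), neg_abs_le (φ q.1), le_abs_self (φ q.1),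
          neg_abs_le (φ q.2), le_abs_self (φ q.2)]
      have hsup : q.1 ∈ K ∨ q.2 ∈ K := by
        by_contra hc
        push_neg at hc
        exact hφq (by rw [image_eq_zero_of_notMem_tsupport hc.1,
          image_eq_zero_of_notMem_tsupport hc.2])
      rcases hsup with h | h
      · have he : T.indicator k q = k q :=
          Set.indicator_of_mem (show q ∈ T from ⟨h, hnorm⟩) k
        rw [hGabs]
        nlinarith [hknn q, mul_le_mul_of_nonneg_right hsq (hknn q)]
      · have hnorm' : (p:ℝ)^N < ‖q.2 - q.1‖ := by rwa [norm_sub_rev]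
        have he : T.indicator k q.swap = k q := by
          rw [Set.indicator_of_mem (show q.swap ∈ T from ⟨h, hnorm'⟩) k, hkswap]
        rw [hGabs]
        nlinarith [hknn q, mul_le_mul_of_nonneg_right hsq (hknn q)]
  have hGint : Integrable G (m.prod m) := by
    refine Integrable.mono' ((h₁int.add h₂int).const_mul ((2*Cφ)^2))
      hGmeas.aestronglyMeasurable (Filter.Eventually.of_forall ?_)
    intro q
    exact hGbound q
  -- integrability of `B`
  set B : ℚ_[p] × ℚ_[p] → ℝ := fun q => (φ q.1^2 / f q.1) * ((f q.1 - f q.2) * k q) with hB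
  have hBmeas : Measurable B := by
    refine Measurable.mul ?_ ?_
    · exact ((hφcont.comp continuous_fst).pow 2).measurable.div
        (hfcont.comp continuous_fst).measurable
    · exact (((hfcont.comp continuous_fst).sub (hfcont.comp continuous_snd)).measurable).mul
        hkmeas
  have hBsec : ∀ x : ℚ_[p], Integrable (fun y => (f x - f y) * ‖x - y‖ ^ (-(1+α))) m := by
    intro x
    refine (hfint x).mono' ?_ ?_
    · exact (((continuous_const.sub hfcont).measurable).mul
        (((continuous_const.sub continuous_id).norm.measurable).pow
          measurable_const)).aestronglyMeasurable
    · refine Filter.Eventually.of_forall (fun y => ?_)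
      rw [Real.norm_eq_abs, abs_mul, abs_of_nonneg (Real.rpow_nonneg (norm_nonneg _) _)]
  -- the locally constant auxiliary integrals
  set H : ℚ_[p] → ℝ := fun x => ∫ y, |f x - f y| * ‖x - y‖ ^ (-(1+α)) ∂m with hH
  set J : ℚ_[p] → ℝ := fun x => ∫ y, (f x - f y) * ‖x - y‖ ^ (-(1+α)) ∂m with hJ
  have hHcont : Continuous H := by
    have := APaux.integral_transfer_cont (m := m) (α := α) hfl (fun t => |t|) abs_zero
    simpa [hH] using this
  have hJcont : Continuous J := by
    have := APaux.integral_transfer_cont (m := m) (α := α) hfl (fun t => t) rfl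
    simpa [hJ] using this
  -- the function ψ dominating the sections of B
  set ψ : ℚ_[p] → ℝ := fun x => (φ x^2 / f x) * H x with hψ
  have hψcont : Continuous ψ :=
    (((hφcont.pow 2).div hfcont (fun x => (hfpos x).ne')).mul hHcont)
  have hψsupp : HasCompactSupport ψ := by
    refine HasCompactSupport.intro hKc (fun x hx => ?_)
    simp [hψ, image_eq_zero_of_notMem_tsupport hx]
  have hψint : Integrable ψ m := hψcont.integrable_of_hasCompactSupport hψsupp
  have hBnorm : ∀ x y : ℚ_[p], ‖B (x, y)‖
      = (φ x^2 / f x) * (|f x - f y| * ‖x - y‖ ^ (-(1+α))) := by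
    intro x y
    have h1 : (0:ℝ) ≤ φ x^2 / f x := div_nonneg (sq_nonneg _) (hfpos x).le
    rw [hB]
    simp only
    rw [Real.norm_eq_abs, abs_mul, abs_mul, abs_of_nonneg h1,
      abs_of_nonneg (hknn (x, y))]
  have hBint : Integrable B (m.prod m) := by
    refine (integrable_prod_iff hBmeas.aestronglyMeasurable).2 ⟨?_, ?_⟩
    · refine Filter.Eventually.of_forall (fun x => ?_)
      have := (hBsec x).const_mul (φ x^2 / f x)
      simp only [hB]
      exact this
    · have : (fun x => ∫ y, ‖B (x, y)‖ ∂m) = ψ := by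
        funext x
        simp only [hBnorm]
        rw [integral_const_mul]
      rw [this]
      exact hψint
  have hB₂int : Integrable (fun q : ℚ_[p] × ℚ_[p] => B q.swap) (m.prod m) := by
    have := (Measure.measurePreserving_swap (μ := m) (ν := m)).integrable_comp
      hBmeas.aestronglyMeasurable
    exact this.2 hBint
  -- the ground state representation (pointwise identity)
  have hident : ∀ q : ℚ_[p] × ℚ_[p], G q - B q - B q.swap
      = (f q.1 * f q.2 * (φ q.1 / f q.1 - φ q.2 / f q.2)^2) * k q := by
    intro q
    have h1 : f q.1 ≠ 0 := (hfpos q.1).ne'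
    have h2 : f q.2 ≠ 0 := (hfpos q.2).ne'
    have hks : k q.swap = k q := hkswap q
    simp only [hG, hB, Prod.fst_swap, Prod.snd_swap, hks]
    field_simp
    ring
  have hPnonneg : ∀ q : ℚ_[p] × ℚ_[p], 0 ≤ G q - B q - B q.swap := by
    intro q
    rw [hident q]
    have h1 : 0 < f q.1 * f q.2 := mul_pos (hfpos q.1) (hfpos q.2)
    have h2 := hknn q
    positivity
  -- the integral inequality ∫ B + ∫ B∘swap ≤ ∫ G
  have h0 : 0 ≤ ∫ q, (G q - B q - B q.swap) ∂(m.prod m) :=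
    integral_nonneg hPnonneg
  have hGB : Integrable (fun q => G q - B q) (m.prod m) := hGint.sub hBint
  rw [integral_sub hGB hB₂int, integral_sub hGint hBint] at h0
  have hswapeq : (∫ q, B q.swap ∂(m.prod m)) = ∫ q, B q ∂(m.prod m) :=
    integral_prod_swap B
  -- Fubini for B
  have hfub : (∫ q, B q ∂(m.prod m)) = ∫ x, (φ x^2 / f x) * J x ∂m := by
    rw [integral_prod _ hBint]
    congr 1
    funext x
    simp only [hB, hJ]
    exact integral_const_mul _ _
  have hGgeq : 2 * ∫ x, (φ x^2 / f x) * J x ∂m ≤ ∫ q, G q ∂(m.prod m) := by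
    rw [hswapeq, hfub] at h0
    linarith
  -- identify Qform and Dop
  have hQG : (∫ q : ℚ_[p] × ℚ_[p], (φ q.1 - φ q.2)^2 * ‖q.1 - q.2‖^(-(1+α)) ∂(m.prod m))
      = ∫ q, G q ∂(m.prod m) := rfl
  have hQeq : Qform p m α φ = (w/2) * ∫ q, G q ∂(m.prod m) := by
    unfold Qform
    have hne : gammaP p (-α) ≠ 0 := ne_of_lt hγ
    have hcoef : -(1 / (2 * gammaP p (-α))) = (-(1 / gammaP p (-α)))/2 := by
      field_simp
    rw [hQG, hcoef, hw]
  have hDeq : ∀ x, Dop p m α f x = w * J x := fun x => rfl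
  -- integrability of V φ² and of the supersolution bound
  have hVint : Integrable (fun x => V x * φ x ^ 2) m := by
    have hIOn : IntegrableOn V K m := hVloc.integrableOn_isCompact hKc
    refine Integrable.mono' (g := K.indicator fun x => Cφ^2 * |V x|) ?_ ?_ ?_
    · exact (integrable_indicator_iff hKclosed.measurableSet).2
        ((hIOn.abs).const_mul _)
    · exact (hVmeas.mul ((hφcont.pow 2).measurable)).aestronglyMeasurable
    · refine Filter.Eventually.of_forall (fun x => ?_)
      by_cases hx : x ∈ K
      · rw [Set.indicator_of_mem hx]
        have h1 : φ x ^ 2 ≤ Cφ^2 := by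
          have := hCφ x
          rw [Real.norm_eq_abs] at this
          nlinarith [abs_nonneg (φ x), sq_abs (φ x), le_abs_self (φ x), neg_abs_le (φ x)]
        rw [Real.norm_eq_abs, abs_mul, abs_of_nonneg (sq_nonneg (φ x))]
        have h2 : 0 ≤ |V x| := abs_nonneg _
        nlinarith
      · rw [Set.indicator_of_notMem hx, image_eq_zero_of_notMem_tsupport hx]
        simp
  have hDcont : Continuous (Dop p m α f) := by
    have : Dop p m α f = fun x => w * J x := funext hDeq
    rw [this]
    exact continuous_const.mul hJcont
  have hgint : Integrable (fun x => (-(Dop p m α f x) / f x) * φ x ^ 2) m := by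
    have hcont : Continuous (fun x => (-(Dop p m α f x) / f x) * φ x ^ 2) :=
      ((hDcont.neg.div hfcont (fun x => (hfpos x).ne')).mul (hφcont.pow 2))
    refine hcont.integrable_of_hasCompactSupport ?_
    refine HasCompactSupport.intro hKc (fun x hx => ?_)
    simp [image_eq_zero_of_notMem_tsupport hx]
  -- compare ∫ V φ² with ∫ (-(Dop f)/f) φ²
  have hVge : (∫ x, (-(Dop p m α f x) / f x) * φ x ^ 2 ∂m) ≤ ∫ x, V x * φ x ^ 2 ∂m := by
    refine integral_mono_ae hgint hVint ?_
    filter_upwards [hV] with x hx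
    exact mul_le_mul_of_nonneg_right hx (sq_nonneg (φ x))
  have hgeq : (∫ x, (-(Dop p m α f x) / f x) * φ x ^ 2 ∂m)
      = - ∫ x, (φ x^2 / f x) * Dop p m α f x ∂m := by
    rw [← integral_neg]
    congr 1
    funext x
    ring
  -- conclude
  have hQge : (∫ x, (φ x^2 / f x) * Dop p m α f x ∂m) ≤ Qform p m α φ := by
    rw [hQeq]
    have h1 : (∫ x, (φ x^2 / f x) * Dop p m α f x ∂m)
        = w * ∫ x, (φ x^2 / f x) * J x ∂m := by
      rw [← integral_const_mul]
      congr 1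
      funext x
      rw [hDeq x]
      ring
    rw [h1]
    have h2 : w * ∫ x, (φ x^2 / f x) * J x ∂m
        = (w/2) * (2 * ∫ x, (φ x^2 / f x) * J x ∂m) := by ring
    rw [h2]
    exact mul_le_mul_of_nonneg_left hGgeq (div_nonneg hw0.le (by norm_num))
  have := hgeq ▸ hVge
  linarith
end

section
/- Let p be a prime and 0 < α < 1. Then for every real b > 0 there exists β with 0 < β < α such that −Γ_p(β+1)/Γ_p(β+1−α) = b. -/
open Real Set Filter Topology

/-- For `0 < α < 1` and every `b > 0` there exists `0 < β < α` with
`-Γ_p(β+1)/Γ_p(β+1-α) = b`. -/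
theorem exists_beta_pos (p : ℕ) (hp : p.Prime) (α : ℝ) (hα0 : 0 < α) (hα1 : α < 1)
    (b : ℝ) (hb : 0 < b) :
    ∃ β : ℝ, 0 < β ∧ β < α ∧ -(gammaP p (β + 1) / gammaP p (β + 1 - α)) = b := by
  set P : ℝ := (p : ℝ) with hPdef
  have hP1 : 1 < P := by rw [hPdef]; exact_mod_cast hp.one_lt
  have hP0 : 0 < P := lt_trans one_pos hP1
  -- continuity of t ↦ P ^ t
  have hPc : Continuous fun t : ℝ => P ^ t := by
    have : (fun t : ℝ => P ^ t) = fun t => Real.exp (Real.log P * t) := by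
      funext t; rw [Real.rpow_def_of_pos hP0]
    rw [this]; exact Real.continuous_exp.comp (continuous_const.mul continuous_id)
  have hlt1 : ∀ x : ℝ, x < 0 → P ^ x < 1 := fun x hx =>
    Real.rpow_lt_one_of_one_lt_of_neg hP1 hx
  -- the nice form of the function
  set N : ℝ → ℝ := fun β => (P ^ β - 1) * (1 - P ^ (α - β - 1)) with hN
  set D : ℝ → ℝ := fun β => (1 - P ^ (-(β + 1))) * (1 - P ^ (β - α)) with hD
  set F : ℝ → ℝ := fun β => N β / D β with hF
  set f : ℝ → ℝ := fun β => -(gammaP p (β + 1) / gammaP p (β + 1 - α)) with hf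
  set s : Set ℝ := Ioo 0 α with hs
  -- equality of f and F on s
  have hEq : EqOn f F s := by
    intro β hβ
    obtain ⟨hβ0, hβα⟩ := hβ
    have h1 : (1 : ℝ) - P ^ (-(β + 1)) ≠ 0 := by
      have := hlt1 (-(β + 1)) (by linarith); linarith
    have h2 : (1 : ℝ) - P ^ (β - α) ≠ 0 := by
      have := hlt1 (β - α) (by linarith); linarith
    have h3 : (1 : ℝ) - P ^ (α - β - 1) ≠ 0 := by
      have := hlt1 (α - β - 1) (by linarith); linarith
    simp only [hf, hF, hN, hD, gammaP]
    have e1 : β + 1 - 1 = β := by ring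
    have e2 : β + 1 - α - 1 = β - α := by ring
    have e3 : -(β + 1 - α) = α - β - 1 := by ring
    rw [e1, e2, e3, ← hPdef]
    field_simp
    ring
  -- continuity of F on s
  have hNc : Continuous N := by
    apply Continuous.mul
    · exact (hPc.comp continuous_id).sub continuous_const
    · exact continuous_const.sub (hPc.comp (by continuity))
  have hDc : Continuous D := by
    apply Continuous.mul
    · exact continuous_const.sub (hPc.comp (by continuity))
    · exact continuous_const.sub (hPc.comp (by continuity))
  have hDpos : ∀ β ∈ s, 0 < D β := by
    intro β hβ
    obtain ⟨hβ0, hβα⟩ := hβ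
    have h1 := hlt1 (-(β + 1)) (by linarith)
    have h2 := hlt1 (β - α) (by linarith)
    have : (0:ℝ) < 1 - P ^ (-(β + 1)) := by linarith
    have : (0:ℝ) < 1 - P ^ (β - α) := by linarith
    exact mul_pos (by linarith) this
  have hFc : ContinuousOn F s := by
    apply ContinuousOn.div hNc.continuousOn hDc.continuousOn
    exact fun β hβ => (hDpos β hβ).ne'
  have hfc : ContinuousOn f s := hFc.congr hEq
  -- filters at the endpoints
  have h0mem : (0:ℝ) ∈ closure s := by
    rw [hs, closure_Ioo hα0.ne]; exact ⟨le_refl 0, hα0.le⟩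
  have hαmem : α ∈ closure s := by
    rw [hs, closure_Ioo hα0.ne]; exact ⟨hα0.le, le_refl α⟩
  haveI nb0 : (𝓝[s] (0:ℝ)).NeBot := mem_closure_iff_nhdsWithin_neBot.mp h0mem
  haveI nbα : (𝓝[s] α).NeBot := mem_closure_iff_nhdsWithin_neBot.mp hαmem
  have hl0 : 𝓝[s] (0:ℝ) ≤ 𝓟 s := inf_le_right
  have hlα : 𝓝[s] α ≤ 𝓟 s := inf_le_right
  -- tendsto at 0
  have hFat0 : Tendsto F (𝓝 (0:ℝ)) (𝓝 0) := by
    have hD0 : D 0 ≠ 0 := by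
      have h1 := hlt1 (-(0 + 1)) (by norm_num)
      have h2 := hlt1 (0 - α) (by linarith)
      have : (0:ℝ) < (1 - P ^ (-((0:ℝ) + 1))) * (1 - P ^ ((0:ℝ) - α)) :=
        mul_pos (by linarith) (by linarith)
      simpa [hD] using this.ne'
    have hcont : ContinuousAt F 0 := (hNc.continuousAt).div hDc.continuousAt hD0
    have hF0 : F 0 = 0 := by simp [hF, hN, Real.rpow_zero]
    simpa [hF0] using hcont.tendsto
  have hfat0 : Tendsto f (𝓝[s] (0:ℝ)) (𝓝 0) := by
    refine Tendsto.congr' ?_ (hFat0.mono_left nhdsWithin_le_nhds)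
    filter_upwards [self_mem_nhdsWithin] with x hx using (hEq hx).symm
  -- tendsto at α : atTop
  have hNatα : Tendsto N (𝓝[s] α) (𝓝 (N α)) :=
    hNc.continuousAt.tendsto.mono_left nhdsWithin_le_nhds
  have hNα : 0 < N α := by
    have h1 : 1 < P ^ α := (Real.one_lt_rpow_iff_of_pos hP0).mpr (Or.inl ⟨hP1, hα0⟩)
    have h2 := hlt1 (α - α - 1) (by linarith)
    have : N α = (P ^ α - 1) * (1 - P ^ (α - α - 1)) := rfl
    rw [this]
    exact mul_pos (by linarith) (by linarith)
  -- D tends to 0 from the right at α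
  have hDatα : Tendsto D (𝓝[s] α) (𝓝[>] (0:ℝ)) := by
    rw [tendsto_nhdsWithin_iff]
    constructor
    · have hDα : D α = 0 := by simp [hD]
      have := hDc.continuousAt.tendsto.mono_left (nhdsWithin_le_nhds (s := s) (a := α))
      rwa [hDα] at this
    · filter_upwards [self_mem_nhdsWithin] with x hx using hDpos x hx
  have hDinv : Tendsto (fun x => (D x)⁻¹) (𝓝[s] α) atTop :=
    hDatα.inv_tendsto_nhdsGT_zero
  have hFatα : Tendsto F (𝓝[s] α) atTop := by
    have h := Filter.Tendsto.pos_mul_atTop hNα hNatα hDinv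
    simpa [hF, div_eq_mul_inv] using h
  have hfatα : Tendsto f (𝓝[s] α) atTop := by
    refine Tendsto.congr' ?_ hFatα
    filter_upwards [self_mem_nhdsWithin] with x hx using (hEq hx).symm
  have hIVT := (isPreconnected_Ioo (a := (0:ℝ)) (b := α)).intermediate_value_Ioi
    hl0 hlα hfc hfat0 hfatα
  obtain ⟨β, hβs, hβeq⟩ := hIVT (mem_Ioi.mpr hb)
  exact ⟨β, hβs.1, hβs.2, hβeq⟩
end

section
/- Let p be a prime, 0 < α < 1, and set b_* := −(Γ_p((1+α)/2))². Then: (i) for every β with α−1 < β < 0 one has b_* ≤ −Γ_p(β+1)/Γ_p(β+1−α) < 0; and (ii) for every real b with b_* ≤ b < 0 there exist β₁ with α−1 < β₁ ≤ (α−1)/2 and β₂ with (α−1)/2 ≤ β₂ < 0 such that −Γ_p(β_i+1)/Γ_p(β_i+1−α) = b for i = 1, 2. -/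
/-- Auxiliary closed form for `-Γ_p(t+1)/Γ_p(t+1-α)`. -/
noncomputable def auxF (P α t : ℝ) : ℝ :=
  -(P^2 * P^(α-1) * (1 - P^t) * (P^t - P^(α-1))) /
    ((P * P^t - 1) * (P * P^(α-1) - P^t))

lemma gamma_ratio (p : ℕ) (hP : 1 < (p:ℝ)) (α β : ℝ)
    (hα0 : 0 < α) (hβ1 : α - 1 < β) (hβ0 : β < 0) :
    -(gammaP p (β + 1) / gammaP p (β + 1 - α)) = auxF (p:ℝ) α β := by
  unfold auxF
  set P := (p:ℝ) with hPdef
  have hP0 : (0:ℝ) < P := by linarith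
  set x := P^β with hx
  set q := P^(α-1) with hq
  have hx0 : 0 < x := Real.rpow_pos_of_pos hP0 _
  have hq0 : 0 < q := Real.rpow_pos_of_pos hP0 _
  have hx1 : x < 1 := Real.rpow_lt_one_of_one_lt_of_neg hP hβ0
  have hqx : q < x := (Real.rpow_lt_rpow_left_iff hP).mpr hβ1
  have hPxe : P * x = P^(β+1) := by
    rw [hx, Real.rpow_add_one (ne_of_gt hP0)]; ring
  have hPx : 1 < P * x := by
    rw [hPxe]
    exact Real.one_lt_rpow_iff_of_pos hP0 |>.mpr (Or.inl ⟨hP, by linarith⟩)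
  have hPqe : P * q = P^α := by
    rw [hq, show α = (α-1)+1 by ring, Real.rpow_add_one (ne_of_gt hP0)]; ring
  have hPq : 1 < P * q := by
    rw [hPqe]
    exact Real.one_lt_rpow_iff_of_pos hP0 |>.mpr (Or.inl ⟨hP, by linarith⟩)
  have hxPq : x < P * q := by linarith
  have g1 : gammaP p (β+1) = (1-x)/(1 - (P*x)⁻¹) := by
    unfold gammaP
    rw [show β+1-1 = β by ring]
    congr 2
    rw [Real.rpow_neg hP0.le, hPxe]
  have g2 : gammaP p (β+1-α) = (1 - x/(P*q))/(1 - q/x) := by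
    unfold gammaP
    have e1 : P^(β+1-α-1) = x/(P*q) := by
      rw [show β+1-α-1 = β - α by ring, Real.rpow_sub hP0, ← hPqe, hx]
    have e2 : P^(-(β+1-α)) = q/x := by
      rw [show -(β+1-α) = (α-1) - β by ring, Real.rpow_sub hP0, hq, hx]
    rw [e1, e2]
  rw [g1, g2]
  have n1 : 1 - (P*x)⁻¹ ≠ 0 := by
    have : (P*x)⁻¹ < 1 := by
      rw [inv_lt_one_iff₀]; right; exact hPx
    linarith
  have n2 : (1 - x/(P*q)) ≠ 0 := by
    have : x/(P*q) < 1 := by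
      rw [div_lt_one (by linarith)]; linarith
    linarith
  have n3 : (1 - q/x) ≠ 0 := by
    have : q/x < 1 := by rw [div_lt_one hx0]; linarith
    linarith
  have n4 : P*x - 1 ≠ 0 := by linarith
  have n5 : P*q - x ≠ 0 := by linarith
  field_simp

lemma gamma_sq (p : ℕ) (hP : 1 < (p:ℝ)) (α : ℝ)
    (hα0 : 0 < α) (hα1 : α < 1) :
    -(gammaP p ((1 + α) / 2)) ^ 2 = auxF (p:ℝ) α ((α-1)/2) := by
  unfold auxF
  set P := (p:ℝ) with hPdef
  have hP0 : (0:ℝ) < P := by linarith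
  set s := P^((α-1)/2) with hs
  have hs0 : 0 < s := Real.rpow_pos_of_pos hP0 _
  have hs1 : s < 1 := Real.rpow_lt_one_of_one_lt_of_neg hP (by linarith)
  have hss : P^(α-1) = s*s := by
    rw [hs, ← Real.rpow_add hP0, show (α-1)/2 + (α-1)/2 = α-1 by ring]
  have hPse : P * s = P^((1+α)/2) := by
    rw [hs, show (1+α)/2 = (α-1)/2 + 1 by ring, Real.rpow_add_one (ne_of_gt hP0)]; ring
  have hPs : 1 < P * s := by
    rw [hPse]
    exact Real.one_lt_rpow_iff_of_pos hP0 |>.mpr (Or.inl ⟨hP, by linarith⟩)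
  have g1 : gammaP p ((1+α)/2) = (1-s)/(1 - (P*s)⁻¹) := by
    unfold gammaP
    rw [show (1+α)/2-1 = (α-1)/2 by ring]
    congr 2
    rw [Real.rpow_neg hP0.le, hPse]
  rw [g1, hss]
  have n1 : 1 - (P*s)⁻¹ ≠ 0 := by
    have : (P*s)⁻¹ < 1 := by rw [inv_lt_one_iff₀]; right; exact hPs
    linarith
  have n4 : P*s - 1 ≠ 0 := by linarith
  have n5 : P*(s*s) - s ≠ 0 := by
    have : s * (P*s - 1) > 0 := mul_pos hs0 (by linarith)
    nlinarith
  field_simp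

lemma alg_max (P s x : ℝ) (hP : 1 < P) (hs0 : 0 < s) (hs1 : s < 1)
    (hPs2 : 1 < P * (s*s)) (hx1 : x < 1) (hx2 : s * s < x) :
    -(P^2 * (s*s) * (1-s) * (s - s*s)) / ((P*s - 1) * (P*(s*s) - s)) ≤
    -(P^2 * (s*s) * (1-x) * (x - s*s)) / ((P*x - 1) * (P*(s*s) - x)) := by
  have hPs : 1 < P * s := by nlinarith
  have hPx : 1 < P * x := by nlinarith
  have hd1 : 0 < (P*s - 1) * (P*(s*s) - s) :=
    mul_pos (by linarith) (by nlinarith)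
  have hd2 : 0 < (P*x - 1) * (P*(s*s) - x) := by
    exact mul_pos (by linarith) (by linarith)
  rw [div_le_div_iff₀ hd1 hd2]
  have key : 0 ≤ P^2*(s*s)*s*((P-1)*((P*(s*s)-1)*(x-s)^2)) := by
    have h1 : (0:ℝ) ≤ P - 1 := by linarith
    have h2 : (0:ℝ) ≤ P*(s*s) - 1 := by linarith
    exact mul_nonneg (by positivity) (mul_nonneg h1 (mul_nonneg h2 (sq_nonneg _)))
  nlinarith [key]

lemma auxF_left (P α : ℝ) : auxF P α (α-1) = 0 := by
  unfold auxF; simp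

lemma auxF_right (P α : ℝ) : auxF P α 0 = 0 := by
  unfold auxF; simp

lemma auxF_contOn (P α a c : ℝ) (hP0 : 0 < P)
    (h : ∀ t ∈ Set.Icc a c, (P * P^t - 1) * (P * P^(α-1) - P^t) ≠ 0) :
    ContinuousOn (fun t => auxF P α t) (Set.Icc a c) := by
  have hc : Continuous fun t : ℝ => P ^ t :=
    continuous_iff_continuousAt.mpr fun _ => Real.continuousAt_const_rpow (ne_of_gt hP0)
  unfold auxF
  apply ContinuousOn.div
  · exact (Continuous.neg (by continuity)).continuousOn
  · exact (by continuity : Continuous fun t : ℝ => (P * P^t - 1) * (P * P^(α-1) - P^t)).continuousOn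
  · exact h

/-- With `b_* = -(Γ_p((1+α)/2))²`: (i) for `α-1 < β < 0` one has
`b_* ≤ -Γ_p(β+1)/Γ_p(β+1-α) < 0`; (ii) every `b ∈ [b_*, 0)` is attained by some
`β₁ ∈ (α-1, (α-1)/2]` and some `β₂ ∈ [(α-1)/2, 0)`. -/
theorem critical_negative_range (p : ℕ) (hp : p.Prime) (α : ℝ)
    (hα0 : 0 < α) (hα1 : α < 1) :
    (∀ β : ℝ, α - 1 < β → β < 0 →
      -(gammaP p ((1 + α) / 2)) ^ 2 ≤ -(gammaP p (β + 1) / gammaP p (β + 1 - α)) ∧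
      -(gammaP p (β + 1) / gammaP p (β + 1 - α)) < 0) ∧
    (∀ b : ℝ, -(gammaP p ((1 + α) / 2)) ^ 2 ≤ b → b < 0 →
      (∃ β₁ : ℝ, α - 1 < β₁ ∧ β₁ ≤ (α - 1) / 2 ∧
        -(gammaP p (β₁ + 1) / gammaP p (β₁ + 1 - α)) = b) ∧
      (∃ β₂ : ℝ, (α - 1) / 2 ≤ β₂ ∧ β₂ < 0 ∧
        -(gammaP p (β₂ + 1) / gammaP p (β₂ + 1 - α)) = b)) := by
  have hP : 1 < (p:ℝ) := by exact_mod_cast hp.one_lt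
  set P := (p:ℝ) with hPdef
  have hP0 : (0:ℝ) < P := by linarith
  set s := P^((α-1)/2) with hs
  have hs0 : 0 < s := Real.rpow_pos_of_pos hP0 _
  have hs1 : s < 1 := Real.rpow_lt_one_of_one_lt_of_neg hP (by linarith)
  have hss : P^(α-1) = s*s := by
    rw [hs, ← Real.rpow_add hP0, show (α-1)/2 + (α-1)/2 = α-1 by ring]
  have hPq : 1 < P * P^(α-1) := by
    rw [show P * P^(α-1) = P^α by
      rw [show α = (α-1)+1 by ring, Real.rpow_add_one (ne_of_gt hP0)]; ring]
    exact Real.one_lt_rpow_iff_of_pos hP0 |>.mpr (Or.inl ⟨hP, by linarith⟩)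
  have hPs : 1 < P * s := by
    rw [hs, show P * P^((α-1)/2) = P^((1+α)/2) by
      rw [show (1+α)/2 = (α-1)/2 + 1 by ring, Real.rpow_add_one (ne_of_gt hP0)]; ring]
    exact Real.one_lt_rpow_iff_of_pos hP0 |>.mpr (Or.inl ⟨hP, by linarith⟩)
  constructor
  · -- part (i)
    intro β hβ1 hβ0
    rw [gamma_ratio p hP α β hα0 hβ1 hβ0, gamma_sq p hP α hα0 hα1]
    have hx0 : 0 < P^β := Real.rpow_pos_of_pos hP0 _
    have hx1 : P^β < 1 := Real.rpow_lt_one_of_one_lt_of_neg hP hβ0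
    have hqx : P^(α-1) < P^β := (Real.rpow_lt_rpow_left_iff hP).mpr hβ1
    have hPx : 1 < P * P^β := by nlinarith
    constructor
    · unfold auxF
      rw [hss, hs]
      have h2 := alg_max P (P^((α-1)/2)) (P^β) hP hs0 hs1 (by rw [← hss]; exact hPq)
        hx1 (by rw [← hss]; exact hqx)
      exact h2
    · unfold auxF
      apply div_neg_of_neg_of_pos
      · have : 0 < P^2 * P^(α-1) * (1 - P^β) * (P^β - P^(α-1)) :=
          mul_pos (mul_pos (mul_pos (by positivity) (by positivity)) (by linarith))
            (by linarith)
        linarith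
      · exact mul_pos (by linarith) (by linarith)
  · -- part (ii)
    intro b hb1 hb2
    rw [gamma_sq p hP α hα0 hα1] at hb1
    constructor
    · -- β₁ in (α-1, (α-1)/2]
      have hcont : ContinuousOn (fun t => auxF P α t) (Set.Icc (α-1) ((α-1)/2)) := by
        apply auxF_contOn P α _ _ hP0
        intro t ht
        obtain ⟨ht1, ht2⟩ := ht
        have h1 : P^(α-1) ≤ P^t := (Real.rpow_le_rpow_left_iff hP).mpr ht1
        have h2 : P^t ≤ s := by rw [hs]; exact (Real.rpow_le_rpow_left_iff hP).mpr ht2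
        have hd1 : 0 < P * P^t - 1 := by nlinarith
        have hd2 : 0 < P * P^(α-1) - P^t := by nlinarith
        positivity
      have hsub := intermediate_value_Icc' (by linarith : α - 1 ≤ (α-1)/2) hcont
      have hmem : b ∈ Set.Icc (auxF P α ((α-1)/2)) (auxF P α (α-1)) := by
        rw [auxF_left]
        exact ⟨hb1, le_of_lt hb2⟩
      obtain ⟨β₁, hβ₁mem, hfβ₁⟩ := hsub hmem
      have hne : β₁ ≠ α - 1 := by
        intro h
        rw [h] at hfβ₁
        simp only [auxF_left] at hfβ₁
        linarith
      have hβ₁1 : α - 1 < β₁ := lt_of_le_of_ne hβ₁mem.1 (Ne.symm hne)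
      have hβ₁2 : β₁ ≤ (α-1)/2 := hβ₁mem.2
      refine ⟨β₁, hβ₁1, hβ₁2, ?_⟩
      rw [gamma_ratio p hP α β₁ hα0 hβ₁1 (by linarith)]
      exact hfβ₁
    · -- β₂ in [(α-1)/2, 0)
      have hcont : ContinuousOn (fun t => auxF P α t) (Set.Icc ((α-1)/2) 0) := by
        apply auxF_contOn P α _ _ hP0
        intro t ht
        obtain ⟨ht1, ht2⟩ := ht
        have h1 : s ≤ P^t := by rw [hs]; exact (Real.rpow_le_rpow_left_iff hP).mpr ht1
        have h2 : P^t ≤ 1 := by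
          rw [show (1:ℝ) = P^(0:ℝ) by rw [Real.rpow_zero]]
          exact (Real.rpow_le_rpow_left_iff hP).mpr ht2
        have hd1 : 0 < P * P^t - 1 := by nlinarith
        have hd2 : 0 < P * P^(α-1) - P^t := by nlinarith
        positivity
      have hsub := intermediate_value_Icc (by linarith : (α-1)/2 ≤ (0:ℝ)) hcont
      have hmem : b ∈ Set.Icc (auxF P α ((α-1)/2)) (auxF P α 0) := by
        rw [auxF_right]
        exact ⟨hb1, le_of_lt hb2⟩
      obtain ⟨β₂, hβ₂mem, hfβ₂⟩ := hsub hmem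
      have hne : β₂ ≠ 0 := by
        intro h
        rw [h] at hfβ₂
        simp only [auxF_right] at hfβ₂
        linarith
      have hβ₂2 : β₂ < 0 := lt_of_le_of_ne hβ₂mem.2 hne
      have hβ₂1 : (α-1)/2 ≤ β₂ := hβ₂mem.1
      refine ⟨β₂, hβ₂1, hβ₂2, ?_⟩
      rw [gamma_ratio p hP α β₂ hα0 (by linarith) hβ₂2]
      exact hfβ₂
end

section
/- Let p be a prime and α > 0. Let B ⊂ B′ be two nearest-neighboring balls in ℚ_p, i.e. balls with m(B′) = p · m(B), and set f_B := (1/m(B)) 1_B − (1/m(B′)) 1_{B′}. Then for every x ∈ ℚ_p the integral ∫_{ℚ_p} (f_B(x) − f_B(y)) ‖x−y‖_p^{−(1+α)} dm(y) converges absolutely and −(1/Γ_p(−α)) ∫_{ℚ_p} (f_B(x) − f_B(y)) ‖x−y‖_p^{−(1+α)} dm(y) = m(B)^{−α} · f_B(x); that is, f_B is an eigenfunction of 𝔇^α with eigenvalue m(B)^{−α}. -/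
open MeasureTheory

lemma term_id (q : ℝ) (hq0 : 0 < q) (α : ℝ) (k : ℤ) (n : ℕ) :
    (q ^ (k + 1 + (n:ℤ))) ^ (-(1 + α)) * (q ^ (k + 1 + (n:ℤ)) - q ^ (k + (n:ℤ)))
      = ((q ^ (k+1)) ^ (-(1 + α)) * (q ^ (k+1) - q ^ k)) * (q ^ (-α)) ^ n := by
  have h1 : ∀ i : ℤ, q ^ i = q ^ (i:ℝ) := fun i => (Real.rpow_intCast q i).symm
  simp only [h1, ← Real.rpow_natCast (q ^ (-α)) n, ← Real.rpow_mul hq0.le, mul_sub, sub_mul,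
    ← Real.rpow_add hq0]
  congr 1 <;> · congr 1; push_cast; ring

lemma pd_annulus {p : ℕ} [Fact p.Prime] (z : ℚ_[p]) (j : ℤ) (h1 : (p:ℝ)^j < ‖z‖)
    (h2 : ‖z‖ ≤ (p:ℝ)^(j+1)) : ‖z‖ = (p:ℝ)^(j+1) := by
  refine le_antisymm h2 ?_
  by_contra hlt
  exact absurd ((Padic.norm_le_pow_iff_norm_lt_pow_add_one z j).mpr (not_le.mp hlt)) (not_le.mpr h1)

lemma pd_norm_sub_of_lt {p : ℕ} [Fact p.Prime] (a b : ℚ_[p]) (h : ‖b‖ < ‖a‖) :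
    ‖a - b‖ = ‖a‖ := by
  refine le_antisymm ?_ ?_
  · simpa [sub_eq_add_neg, h.le] using Padic.nonarchimedean a (-b)
  · have : ‖a‖ ≤ max ‖a - b‖ ‖b‖ := by simpa using Padic.nonarchimedean (a - b) b
    rcases le_max_iff.mp this with h' | h'
    · exact h'
    · exact absurd h' (not_le.mpr h)

lemma pd_mem_ball_congr {p : ℕ} [Fact p.Prime] (x y x₀ : ℚ_[p]) (s r : ℝ) (hsr : s ≤ r)
    (hxy : dist y x ≤ s) : y ∈ Metric.closedBall x₀ r ↔ x ∈ Metric.closedBall x₀ r := by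
  simp only [Metric.mem_closedBall]
  constructor <;> intro h
  · exact le_trans (IsUltrametricDist.dist_triangle_max x y x₀)
      (max_le (le_trans (dist_comm x y ▸ hxy) hsr) h)
  · exact le_trans (IsUltrametricDist.dist_triangle_max y x x₀)
      (max_le (le_trans hxy hsr) h)

lemma tail_integral {p : ℕ} [Fact p.Prime] [MeasurableSpace ℚ_[p]] [BorelSpace ℚ_[p]]
    (m : Measure ℚ_[p])
    (hm : ∀ (x : ℚ_[p]) (k : ℤ),
      m (Metric.closedBall x ((p : ℝ) ^ k)) = ENNReal.ofReal ((p : ℝ) ^ k))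
    (α : ℝ) (hα : 0 < α) (k : ℤ) (x : ℚ_[p]) :
    IntegrableOn (fun y => ‖x - y‖ ^ (-(1 + α))) (Metric.closedBall x ((p:ℝ)^k))ᶜ m ∧
    ∫ y in (Metric.closedBall x ((p:ℝ)^k))ᶜ, ‖x - y‖ ^ (-(1 + α)) ∂m
      = ((p:ℝ) ^ (k+1)) ^ (-(1+α)) * ((p:ℝ)^(k+1) - (p:ℝ)^k) * (1 - (p:ℝ)^(-α))⁻¹ := by
  set q : ℝ := (p : ℝ) with hqdef
  have hq1 : 1 < q := by rw [hqdef]; exact_mod_cast (Fact.out : p.Prime).one_lt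
  have hq0 : 0 < q := lt_trans one_pos hq1
  set K : ℚ_[p] → ℝ := fun y => ‖x - y‖ ^ (-(1 + α)) with hKdef
  have hKmeas : Measurable K :=
    ((continuous_const.sub continuous_id).norm.measurable).pow measurable_const
  have hKnonneg : ∀ y, 0 ≤ K y := fun y => Real.rpow_nonneg (norm_nonneg _) _
  set S : ℕ → Set ℚ_[p] := fun n =>
    Metric.closedBall x (q ^ (k + 1 + (n:ℤ))) \ Metric.closedBall x (q ^ (k + (n:ℤ))) with hSdef
  have hSm : ∀ n, MeasurableSet (S n) :=
    fun n => measurableSet_closedBall.diff measurableSet_closedBall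
  have hnormS : ∀ n, ∀ y ∈ S n, ‖x - y‖ = q ^ (k + 1 + (n:ℤ)) := by
    intro n y hy
    obtain ⟨hy1, hy2⟩ := hy
    rw [Metric.mem_closedBall] at hy1 hy2
    push_neg at hy2
    rw [dist_eq_norm, ← norm_sub_rev] at hy1 hy2
    have := pd_annulus (x - y) (k + (n:ℤ)) hy2 (by rw [show k + (n:ℤ) + 1 = k + 1 + n by ring]; exact hy1)
    rwa [show k + (n:ℤ) + 1 = k + 1 + n by ring] at this
  have hdisj : Pairwise (Function.onFun Disjoint S) := by
    intro a b hab
    rw [Function.onFun, Set.disjoint_left]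
    intro y hya hyb
    have h1 := hnormS a y hya
    have h2 := hnormS b y hyb
    rw [h1] at h2
    have := zpow_right_injective₀ hq0 hq1.ne' h2
    omega
  have hUnion : (⋃ n, S n) = (Metric.closedBall x (q^k))ᶜ := by
    ext y
    simp only [Set.mem_iUnion, Set.mem_compl_iff, Metric.mem_closedBall, not_le]
    constructor
    · rintro ⟨n, hy⟩
      obtain ⟨-, hy2⟩ := hy
      rw [Metric.mem_closedBall] at hy2
      exact lt_of_le_of_lt (zpow_le_zpow_right₀ hq1.le (by omega : k ≤ k + (n:ℤ)))
        (not_le.mp hy2)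
    · intro hy
      have hz : x - y ≠ 0 := by
        intro h
        rw [dist_eq_norm, ← norm_sub_rev, h, norm_zero] at hy
        exact absurd hy (not_lt.mpr (zpow_pos hq0 k).le)
      have hval : ‖x - y‖ = q ^ (-(x - y).valuation) := Padic.norm_eq_zpow_neg_valuation hz
      set j : ℤ := -(x - y).valuation with hj
      have hyn : dist y x = q ^ j := by rw [dist_eq_norm, ← norm_sub_rev, hval]
      have hkj : k < j := by
        rw [hyn] at hy
        exact (zpow_lt_zpow_iff_right₀ hq1).mp hy
      refine ⟨(j - (k+1)).toNat, ?_, ?_⟩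
      · rw [Metric.mem_closedBall, hyn]
        have : k + 1 + ((j - (k+1)).toNat : ℤ) = j := by omega
        rw [this]
      · rw [Metric.mem_closedBall, hyn, not_le]
        have : k + ((j - (k+1)).toNat : ℤ) < j := by omega
        exact (zpow_lt_zpow_iff_right₀ hq1).mpr this
  
  have hfin : ∀ r : ℤ, m (Metric.closedBall x (q ^ r)) ≠ ⊤ := fun r => by
    rw [hm]; exact ENNReal.ofReal_ne_top
  have hmeasS : ∀ n : ℕ, m (S n) = ENNReal.ofReal (q ^ (k+1+(n:ℤ)) - q ^ (k+(n:ℤ))) := by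
    intro n
    have hsub : Metric.closedBall x (q ^ (k + (n:ℤ))) ⊆ Metric.closedBall x (q ^ (k+1+(n:ℤ))) :=
      Metric.closedBall_subset_closedBall (zpow_le_zpow_right₀ hq1.le (by omega))
    rw [hSdef]
    rw [measure_diff hsub measurableSet_closedBall.nullMeasurableSet (hfin _), hm, hm,
      ← ENNReal.ofReal_sub _ (zpow_pos hq0 _).le]
  set C : ℝ := (q ^ (k+1)) ^ (-(1+α)) * (q ^ (k+1) - q ^ k) with hCdef
  set a : ℝ := q ^ (-α) with hadef
  have ha0 : 0 ≤ a := Real.rpow_nonneg hq0.le _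
  have ha1 : a < 1 := Real.rpow_lt_one_of_one_lt_of_neg hq1 (neg_neg_iff_pos.mpr hα)
  have hC0 : 0 ≤ C := mul_nonneg (Real.rpow_nonneg (zpow_pos hq0 _).le _)
    (sub_nonneg.mpr (zpow_le_zpow_right₀ hq1.le (by omega)))
  have hsum : Summable (fun n : ℕ => C * a ^ n) :=
    (summable_geometric_of_lt_one ha0 ha1).mul_left C
  have hKconst : ∀ n : ℕ, ∀ y ∈ S n, K y = (q ^ (k+1+(n:ℤ))) ^ (-(1+α)) := by
    intro n y hy
    show ‖x - y‖ ^ (-(1+α)) = _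
    rw [hnormS n y hy]
  have hlint : ∀ n : ℕ, ∫⁻ y in S n, ENNReal.ofReal (K y) ∂m = ENNReal.ofReal (C * a ^ n) := by
    intro n
    rw [setLIntegral_congr_fun_ae (hSm n)
      (ae_of_all _ (fun y hy => by rw [hKconst n y hy] :
        ∀ y ∈ S n, ENNReal.ofReal (K y)
          = (fun _ => ENNReal.ofReal ((q ^ (k+1+(n:ℤ))) ^ (-(1+α)))) y)),
      setLIntegral_const, hmeasS n,
      ← ENNReal.ofReal_mul (Real.rpow_nonneg (zpow_pos hq0 _).le _), term_id q hq0 α k n]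
  have hDm : MeasurableSet ((Metric.closedBall x (q^k))ᶜ) := measurableSet_closedBall.compl
  have hlintD : ∫⁻ y in (Metric.closedBall x (q^k))ᶜ, ENNReal.ofReal (K y) ∂m
      = ENNReal.ofReal (C * (1-a)⁻¹) := by
    rw [← hUnion, lintegral_iUnion hSm hdisj]
    rw [show (∑' n : ℕ, ∫⁻ y in S n, ENNReal.ofReal (K y) ∂m)
        = ∑' n : ℕ, ENNReal.ofReal (C * a ^ n) from tsum_congr hlint,
      ← ENNReal.ofReal_tsum_of_nonneg (fun n => mul_nonneg hC0 (pow_nonneg ha0 n)) hsum,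
      tsum_mul_left, tsum_geometric_of_lt_one ha0 ha1]
  have hInt : IntegrableOn K (Metric.closedBall x (q^k))ᶜ m := by
    refine ⟨hKmeas.aestronglyMeasurable, ?_⟩
    rw [hasFiniteIntegral_iff_ofReal (ae_of_all _ hKnonneg)]
    rw [hlintD]
    exact ENNReal.ofReal_lt_top
  refine ⟨hInt, ?_⟩
  have hIntU : IntegrableOn K (⋃ n, S n) m := by rw [hUnion]; exact hInt
  have hInS : ∀ n : ℕ, ∫ y in S n, K y ∂m = C * a ^ n := by
    intro n
    rw [setIntegral_congr_fun (hSm n) (hKconst n), setIntegral_const, measureReal_def, hmeasS n,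
      ENNReal.toReal_ofReal (sub_nonneg.mpr (zpow_le_zpow_right₀ hq1.le (by omega))),
      smul_eq_mul, mul_comm]
    exact term_id q hq0 α k n
  calc ∫ y in (Metric.closedBall x (q^k))ᶜ, K y ∂m
      = ∫ y in ⋃ n, S n, K y ∂m := by rw [hUnion]
    _ = ∑' n : ℕ, ∫ y in S n, K y ∂m := integral_iUnion hSm hdisj hIntU
    _ = ∑' n : ℕ, C * a ^ n := tsum_congr hInS
    _ = C * (1 - a)⁻¹ := by rw [tsum_mul_left, tsum_geometric_of_lt_one ha0 ha1]
lemma scalar_id (p : ℕ) (hq1 : 1 < (p:ℝ)) (α : ℝ) (hα : 0 < α) (k : ℤ) :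
    -(1 / gammaP p (-α)) *
      (((p:ℝ) ^ (k+1)) ^ (-(1+α)) * ((p:ℝ) ^ (k+1) - (p:ℝ) ^ k) * (1 - (p:ℝ) ^ (-α))⁻¹
        + ((p:ℝ) ^ (k+1)) ^ (-(1+α)) * (p:ℝ) ^ k)
    = ((p:ℝ) ^ k) ^ (-α) := by
  set q : ℝ := (p:ℝ) with hqdef
  have hq0 : (0:ℝ) < q := lt_trans one_pos hq1
  set u : ℝ := q ^ k with hudef
  have hu0 : 0 < u := zpow_pos hq0 k
  set a : ℝ := q ^ (-α) with hadef
  have ha0 : 0 < a := Real.rpow_pos_of_pos hq0 _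
  have ha1 : a < 1 := Real.rpow_lt_one_of_one_lt_of_neg hq1 (neg_neg_iff_pos.mpr hα)
  set w : ℝ := u ^ (-α) with hwdef
  have hw0 : 0 < w := Real.rpow_pos_of_pos hu0 _
  have e0 : q ^ (k+1) = u * q := by rw [hudef, zpow_add_one₀ hq0.ne']
  have e1 : (q ^ (k+1)) ^ (-(1+α)) = (u * q)⁻¹ * (w * a) := by
    rw [e0, show (-(1+α)) = (-1) + (-α) by ring, Real.rpow_add (mul_pos hu0 hq0),
      Real.rpow_neg_one, Real.mul_rpow hu0.le hq0.le]
  have e2 : gammaP p (-α) = (1 - a * q⁻¹) / (1 - a⁻¹) := by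
    rw [gammaP]
    congr 1
    · rw [show -α - 1 = (-α) + (-1) by ring, Real.rpow_add hq0, Real.rpow_neg_one]
    · rw [neg_neg, show (α : ℝ) = -(-α) by ring, Real.rpow_neg hq0.le]
  rw [e1, e2, e0]
  have h1 : (1:ℝ) - a ≠ 0 := by nlinarith
  have h2 : (1:ℝ) - a⁻¹ ≠ 0 := by
    have : 1 < a⁻¹ := (one_lt_inv₀ ha0).mpr ha1
    linarith
  have h3 : (1:ℝ) - a * q⁻¹ ≠ 0 := by
    have hq : q⁻¹ < 1 := inv_lt_one_of_one_lt₀ hq1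
    have : a * q⁻¹ < 1 := by nlinarith [inv_pos.mpr hq0]
    nlinarith
  have hqa : q - a ≠ 0 := by nlinarith
  have ha1' : a - 1 ≠ 0 := by nlinarith
  have hu : u ≠ 0 := hu0.ne'
  have hq : q ≠ 0 := hq0.ne'
  have ha : a ≠ 0 := ha0.ne'
  field_simp
  ring



/-- For nearest-neighboring balls `B = B(x₀, p^k) ⊂ B' = B(x₀, p^{k+1})`
(so `m(B') = p · m(B)`), the function `f_B = (1/m(B))1_B - (1/m(B'))1_{B'}` is an
eigenfunction of the Taibleson–Vladimirov operator `𝔇^α` with eigenvalue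
`m(B)^{-α} = (p^k)^{-α}`, all defining integrals converging absolutely. -/
theorem eigenfunction_of_nearest_balls (p : ℕ) [Fact p.Prime]
    [MeasurableSpace ℚ_[p]] [BorelSpace ℚ_[p]] (m : Measure ℚ_[p])
    (hm : ∀ (x : ℚ_[p]) (k : ℤ),
      m (Metric.closedBall x ((p : ℝ) ^ k)) = ENNReal.ofReal ((p : ℝ) ^ k))
    (α : ℝ) (hα : 0 < α) (x₀ : ℚ_[p]) (k : ℤ)
    (B B' : Set ℚ_[p]) (hB : B = Metric.closedBall x₀ ((p : ℝ) ^ k))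
    (hB' : B' = Metric.closedBall x₀ ((p : ℝ) ^ (k + 1)))
    (fB : ℚ_[p] → ℝ)
    (hfB : fB = fun y => (1 / (p : ℝ) ^ k) * Set.indicator B 1 y
      - (1 / (p : ℝ) ^ (k + 1)) * Set.indicator B' 1 y) :
    ∀ x : ℚ_[p],
      Integrable (fun y : ℚ_[p] => (fB x - fB y) * ‖x - y‖ ^ (-(1 + α))) m ∧
      -(1 / gammaP p (-α)) *
          ∫ y : ℚ_[p], (fB x - fB y) * ‖x - y‖ ^ (-(1 + α)) ∂m
        = ((p : ℝ) ^ k) ^ (-α) * fB x := by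
  intro x
  set q : ℝ := (p : ℝ) with hqdef
  have hq1 : 1 < q := by rw [hqdef]; exact_mod_cast (Fact.out : p.Prime).one_lt
  have hq0 : 0 < q := lt_trans one_pos hq1
  have hBm : MeasurableSet B := by rw [hB]; exact measurableSet_closedBall
  have hB'm : MeasurableSet B' := by rw [hB']; exact measurableSet_closedBall
  have hmB : m B = ENNReal.ofReal (q ^ k) := by rw [hB]; exact hm x₀ k
  have hmB' : m B' = ENNReal.ofReal (q ^ (k+1)) := by rw [hB']; exact hm x₀ (k+1)
  have hBsub : B ⊆ B' := by
    rw [hB, hB']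
    exact Metric.closedBall_subset_closedBall (zpow_le_zpow_right₀ hq1.le (by omega))
  have hindB : Integrable (B.indicator (1 : ℚ_[p] → ℝ)) m := by
    rw [integrable_indicator_iff hBm]
    exact integrableOn_const (by rw [hmB]; exact ENNReal.ofReal_ne_top)
  have hindB' : Integrable (B'.indicator (1 : ℚ_[p] → ℝ)) m := by
    rw [integrable_indicator_iff hB'm]
    exact integrableOn_const (by rw [hmB']; exact ENNReal.ofReal_ne_top)
  have hfBint : Integrable fB m := by
    rw [hfB]
    exact (hindB.const_mul _).sub (hindB'.const_mul _)
  have hintfB : ∫ y, fB y ∂m = 0 := by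
    rw [hfB, integral_sub (hindB.const_mul _) (hindB'.const_mul _), integral_const_mul,
      integral_const_mul, integral_indicator_one hBm, integral_indicator_one hB'm, measureReal_def, measureReal_def, hmB, hmB',
      ENNReal.toReal_ofReal (zpow_pos hq0 _).le, ENNReal.toReal_ofReal (zpow_pos hq0 _).le]
    field_simp; ring
  obtain ⟨hKint, hKval⟩ := tail_integral m hm α hα k x
  have hloc : ∀ y ∈ Metric.closedBall x (q^k), fB y = fB x := by
    intro y hy
    rw [Metric.mem_closedBall] at hy
    have h1 : y ∈ B ↔ x ∈ B := by rw [hB]; exact pd_mem_ball_congr x y x₀ _ _ le_rfl hy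
    have h2 : y ∈ B' ↔ x ∈ B' := by
      rw [hB']; exact pd_mem_ball_congr x y x₀ _ _ (zpow_le_zpow_right₀ hq1.le (by omega)) hy
    have e1 : B.indicator (1 : ℚ_[p] → ℝ) y = B.indicator 1 x := by
      by_cases hmem : y ∈ B
      · rw [Set.indicator_of_mem hmem, Set.indicator_of_mem (h1.mp hmem)]; rfl
      · rw [Set.indicator_of_notMem hmem, Set.indicator_of_notMem (fun hc => hmem (h1.mpr hc))]
    have e2 : B'.indicator (1 : ℚ_[p] → ℝ) y = B'.indicator 1 x := by
      by_cases hmem : y ∈ B'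
      · rw [Set.indicator_of_mem hmem, Set.indicator_of_mem (h2.mp hmem)]; rfl
      · rw [Set.indicator_of_notMem hmem, Set.indicator_of_notMem (fun hc => hmem (h2.mpr hc))]
    rw [hfB]
    simp only [e1, e2]
  set R : ℝ := max ‖x - x₀‖ (q ^ (k+1)) with hRdef
  set c : ℝ := R ^ (-(1+α)) with hcdef
  have hRkey : ∀ y, q^k < dist y x → fB y * ‖x - y‖ ^ (-(1+α)) = c * fB y := by
    intro y hy
    by_cases hyB' : y ∈ B'
    · have hyB'' : dist y x₀ ≤ q^(k+1) := by rw [hB'] at hyB'; exact hyB'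
      have hxy : q^k < ‖x - y‖ := by
        rwa [dist_eq_norm, norm_sub_rev] at hy
      have hnorm : ‖x - y‖ = R := by
        rcases le_or_gt ‖x - x₀‖ (q^(k+1)) with hc1 | hc1
        · rw [hRdef, max_eq_right hc1]
          apply pd_annulus (x - y) k hxy
          calc ‖x - y‖ = dist x y := (dist_eq_norm x y).symm
            _ ≤ max (dist x x₀) (dist x₀ y) := IsUltrametricDist.dist_triangle_max x x₀ y
            _ ≤ q^(k+1) := max_le (by rw [dist_eq_norm]; exact hc1)
                (by rw [dist_comm]; exact hyB'')
        · rw [hRdef, max_eq_left hc1.le, ← sub_sub_sub_cancel_right x y x₀]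
          apply pd_norm_sub_of_lt
          calc ‖y - x₀‖ = dist y x₀ := (dist_eq_norm y x₀).symm
            _ ≤ q^(k+1) := hyB''
            _ < ‖x - x₀‖ := hc1
      rw [hnorm]; ring
    · have hyB : y ∉ B := fun hc => hyB' (hBsub hc)
      have h0 : fB y = 0 := by
        rw [hfB]
        simp [Set.indicator_of_notMem hyB, Set.indicator_of_notMem hyB']
      rw [h0]; ring
  have hDcint : ∫ y in Metric.closedBall x (q^k), fB y ∂m = q^k * fB x := by
    rw [setIntegral_congr_fun measurableSet_closedBall hloc, setIntegral_const, measureReal_def, hm x k,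
      ENNReal.toReal_ofReal (zpow_pos hq0 k).le, smul_eq_mul]
  have hDint : ∫ y in (Metric.closedBall x (q^k))ᶜ, fB y ∂m = -(q^k * fB x) := by
    have h := integral_add_compl (measurableSet_closedBall
      (x := x) (ε := q^k)) hfBint (μ := m)
    rw [hintfB, hDcint] at h
    linarith
  set D : Set ℚ_[p] := (Metric.closedBall x (q^k))ᶜ with hDdef
  have hDm : MeasurableSet D := measurableSet_closedBall.compl
  have hpt : ∀ y, (fB x - fB y) * ‖x - y‖ ^ (-(1 + α))
      = fB x * D.indicator (fun z => ‖x - z‖ ^ (-(1 + α))) y - c * D.indicator fB y := by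
    intro y
    by_cases hy : y ∈ D
    · rw [Set.indicator_of_mem hy, Set.indicator_of_mem hy]
      have hy' : q^k < dist y x := by
        rw [hDdef, Set.mem_compl_iff, Metric.mem_closedBall, not_le] at hy
        exact hy
      have h := hRkey y hy'
      rw [sub_mul, h]
    · rw [Set.indicator_of_notMem hy, Set.indicator_of_notMem hy]
      have hy' : y ∈ Metric.closedBall x (q^k) := Set.not_notMem.mp hy
      rw [hloc y hy']
      ring
  have hg1 : Integrable (fun y => fB x * D.indicator (fun z => ‖x - z‖ ^ (-(1 + α))) y) m :=
    ((integrable_indicator_iff hDm).mpr hKint).const_mul _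
  have hg2 : Integrable (fun y => c * D.indicator fB y) m :=
    ((integrable_indicator_iff hDm).mpr hfBint.integrableOn).const_mul _
  have hint : Integrable (fun y : ℚ_[p] => (fB x - fB y) * ‖x - y‖ ^ (-(1 + α))) m :=
    (hg1.sub hg2).congr (ae_of_all _ fun y => (hpt y).symm)
  refine ⟨hint, ?_⟩
  have hval : ∫ y, (fB x - fB y) * ‖x - y‖ ^ (-(1 + α)) ∂m
      = fB x * (∫ y in D, ‖x - y‖ ^ (-(1 + α)) ∂m) - c * ∫ y in D, fB y ∂m := by
    rw [integral_congr_ae (ae_of_all _ hpt), integral_sub hg1 hg2, integral_const_mul,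
      integral_const_mul, integral_indicator hDm, integral_indicator hDm]
  rw [hval, hKval, hDint]
  by_cases hx : x ∈ B'
  · have hcval : c = (q^(k+1)) ^ (-(1+α)) := by
      rw [hcdef, hRdef, max_eq_right]
      rw [hB', Metric.mem_closedBall] at hx
      rw [← dist_eq_norm]
      exact hx
    rw [hcval]
    have hs := scalar_id p hq1 α hα k
    linear_combination fB x * hs
  · have hxB : x ∉ B := fun hc => hx (hBsub hc)
    have hfx : fB x = 0 := by
      rw [hfB]
      simp [Set.indicator_of_notMem hxB, Set.indicator_of_notMem hx]
    rw [hfx]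
    ring
end

section
/- Let p be a prime, 0 < β < α < 1, and let V(x) := (‖x‖_p + 1)^{−β}. Then for every λ > 0 there exists a locally constant compactly supported function φ : ℚ_p → ℝ such that Q_α(φ) − λ ∫_{ℚ_p} V(x) φ(x)² dm(x) < 0. (There is no positive coupling threshold: the Schrödinger form 𝔇^α − λV has negative spectrum for every λ > 0.) -/
open MeasureTheory

/- ### Auxiliary lemmas -/

private lemma padic_norm_sub_eq_right {p : ℕ} [Fact p.Prime] {x y : ℚ_[p]}
    (h : ‖x‖ < ‖y‖) : ‖x - y‖ = ‖y‖ := by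
  rw [sub_eq_add_neg, Padic.add_eq_max_of_ne (by rw [norm_neg]; exact ne_of_lt h)]
  simp [norm_neg, max_eq_right h.le]

private lemma padic_norm_sub_eq_left {p : ℕ} [Fact p.Prime] {x y : ℚ_[p]}
    (h : ‖y‖ < ‖x‖) : ‖x - y‖ = ‖x‖ := by
  rw [← norm_neg, neg_sub]
  exact padic_norm_sub_eq_right h

private lemma rpow_pow_calc {P : ℝ} (hP : 0 < P) (α : ℝ) (j : ℕ) :
    (P ^ j) ^ (-(1 + α)) * P ^ (j + 1) = P * (P ^ (-α)) ^ j := by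
  have h1 : (P ^ j : ℝ) ^ (-(1 + α)) = P ^ ((j : ℝ) * (-(1 + α))) := by
    rw [← Real.rpow_natCast P j, ← Real.rpow_mul hP.le]
  have h2 : (P ^ (-α)) ^ j = P ^ (-α * (j : ℝ)) := by
    rw [← Real.rpow_natCast (P ^ (-α)) j, ← Real.rpow_mul hP.le]
  have h3 : (P : ℝ) ^ (j + 1) = P ^ ((j : ℝ) + 1) := by
    rw [← Real.rpow_natCast P (j + 1)]; push_cast; ring_nf
  rw [h1, h2, h3, ← Real.rpow_add hP]
  have h4 : (j : ℝ) * (-(1 + α)) + ((j : ℝ) + 1) = 1 + -α * (j : ℝ) := by ring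
  rw [h4, Real.rpow_add hP, Real.rpow_one]

private lemma rpow_pow_calc2 {P : ℝ} (hP : 0 < P) (β : ℝ) (k : ℕ) :
    (P ^ k) ^ (-β) = (P ^ (-β)) ^ k := by
  rw [← Real.rpow_natCast P k, ← Real.rpow_natCast (P ^ (-β)) k,
    ← Real.rpow_mul hP.le, ← Real.rpow_mul hP.le, mul_comm]

private lemma padic_sigmaFinite {p : ℕ} [Fact p.Prime] [MeasurableSpace ℚ_[p]]
    [BorelSpace ℚ_[p]] (m : Measure ℚ_[p])
    (hm : ∀ (x : ℚ_[p]) (k : ℤ),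
      m (Metric.closedBall x ((p : ℝ) ^ k)) = ENNReal.ofReal ((p : ℝ) ^ k)) :
    SigmaFinite m := by
  have hP : (1 : ℝ) < p := Nat.one_lt_cast.mpr (Fact.out (p := p.Prime)).one_lt
  refine ⟨⟨⟨fun n => Metric.closedBall 0 ((p : ℝ) ^ (n : ℤ)), fun _ => trivial,
    fun n => ?_, ?_⟩⟩⟩
  · rw [hm]; exact ENNReal.ofReal_lt_top
  · apply Set.eq_univ_of_forall; intro x
    obtain ⟨n, hn⟩ := pow_unbounded_of_one_lt ‖x‖ hP
    refine Set.mem_iUnion.mpr ⟨n, ?_⟩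
    rw [mem_closedBall_zero_iff, zpow_natCast]
    exact hn.le

/-- Tail estimate: `∫_{‖y‖ > p^k} ‖y‖^{-(1+α)} dm ≤ (p/(1-p^{-α})) · (p^{-α})^k`. -/
private lemma padic_tail_bound {p : ℕ} [Fact p.Prime] [MeasurableSpace ℚ_[p]]
    [BorelSpace ℚ_[p]] (m : Measure ℚ_[p])
    (hm : ∀ (x : ℚ_[p]) (k : ℤ),
      m (Metric.closedBall x ((p : ℝ) ^ k)) = ENNReal.ofReal ((p : ℝ) ^ k))
    {α : ℝ} (hα0 : 0 < α) (k : ℕ) :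
    ∫⁻ y in (Metric.closedBall (0 : ℚ_[p]) ((p : ℝ) ^ k))ᶜ,
        ENNReal.ofReal (‖y‖ ^ (-(1 + α))) ∂m
      ≤ ENNReal.ofReal ((p : ℝ) / (1 - (p : ℝ) ^ (-α)) * ((p : ℝ) ^ (-α)) ^ k) := by
  set P : ℝ := (p : ℝ) with hP_def
  have hP : (1 : ℝ) < P := Nat.one_lt_cast.mpr (Fact.out (p := p.Prime)).one_lt
  have hP0 : (0 : ℝ) < P := lt_trans one_pos hP
  set a : ℝ := P ^ (-α) with ha_def
  have ha0 : 0 < a := Real.rpow_pos_of_pos hP0 _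
  have ha1 : a < 1 := Real.rpow_lt_one_of_one_lt_of_neg hP (by linarith)
  set B : ℕ → Set ℚ_[p] := fun j => Metric.closedBall 0 (P ^ j) with hB_def
  have hmB : ∀ j, m (B j) = ENNReal.ofReal (P ^ j) := by
    intro j
    have := hm 0 (j : ℤ)
    rwa [zpow_natCast] at this
  have hBmeas : ∀ j, MeasurableSet (B j) := fun j => measurableSet_closedBall
  have hmemB : ∀ (j : ℕ) (y : ℚ_[p]), y ∈ B j ↔ ‖y‖ ≤ P ^ j := by
    intro j y; rw [hB_def]; exact mem_closedBall_zero_iff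
  set A : ℕ → Set ℚ_[p] := fun n => B (k + n + 1) \ B (k + n) with hA_def
  have hAmeas : ∀ n, MeasurableSet (A n) := fun n => (hBmeas _).diff (hBmeas _)
  have hBmono : ∀ {i j : ℕ}, i ≤ j → B i ⊆ B j := by
    intro i j hij
    exact Metric.closedBall_subset_closedBall (pow_le_pow_right₀ hP.le hij)
  have hdisj : Pairwise (Function.onFun Disjoint A) := by
    have key : ∀ i j, i < j → Disjoint (A i) (A j) := by
      intro i j hij
      rw [Set.disjoint_left]
      intro y hyi hyj
      exact hyj.2 (hBmono (by omega) hyi.1)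
    intro i j hij
    rcases hij.lt_or_gt with h | h
    · exact key i j h
    · exact (key j i h).symm
  have hUnion : (B k)ᶜ = ⋃ n, A n := by
    ext y
    simp only [Set.mem_compl_iff, Set.mem_iUnion]
    constructor
    · intro hy
      have hex : ∃ n, ‖y‖ ≤ P ^ (k + n + 1) := by
        obtain ⟨N, hN⟩ := pow_unbounded_of_one_lt ‖y‖ hP
        exact ⟨N, hN.le.trans (pow_le_pow_right₀ hP.le (by omega))⟩
      refine ⟨Nat.find hex, ⟨(hmemB _ y).mpr (Nat.find_spec hex), ?_⟩⟩
      rw [hmemB]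
      rcases Nat.eq_zero_or_pos (Nat.find hex) with h0 | h0
      · rw [h0]
        simpa [hmemB] using hy
      · obtain ⟨n', hn'⟩ := Nat.exists_eq_add_of_lt h0
        intro hcon
        refine Nat.find_min hex (m := n') (by omega) ?_
        have heq : k + n' + 1 = k + Nat.find hex := by omega
        rwa [heq]
    · rintro ⟨n, hn⟩ hy
      exact hn.2 (hBmono (by omega) hy)
  rw [hUnion, lintegral_iUnion hAmeas hdisj]
  have hterm : ∀ n, ∫⁻ y in A n, ENNReal.ofReal (‖y‖ ^ (-(1 + α))) ∂m
      ≤ ENNReal.ofReal ((P * a ^ k) * a ^ n) := by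
    intro n
    have hstep1 : ∫⁻ y in A n, ENNReal.ofReal (‖y‖ ^ (-(1 + α))) ∂m
        ≤ ∫⁻ _ in A n, ENNReal.ofReal ((P ^ (k + n)) ^ (-(1 + α))) ∂m := by
      apply setLIntegral_mono measurable_const
      intro y hy
      apply ENNReal.ofReal_le_ofReal
      apply Real.rpow_le_rpow_of_nonpos (pow_pos hP0 _) _ (by linarith)
      have := hy.2
      rw [hmemB] at this
      exact (not_le.mp this).le
    refine hstep1.trans ?_
    rw [setLIntegral_const]
    have hmA : m (A n) ≤ ENNReal.ofReal (P ^ (k + n + 1)) := by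
      rw [← hmB]
      exact measure_mono Set.diff_subset
    calc ENNReal.ofReal ((P ^ (k + n)) ^ (-(1 + α))) * m (A n)
        ≤ ENNReal.ofReal ((P ^ (k + n)) ^ (-(1 + α))) * ENNReal.ofReal (P ^ (k + n + 1)) :=
          mul_le_mul_right hmA _
      _ = ENNReal.ofReal ((P ^ (k + n)) ^ (-(1 + α)) * P ^ (k + n + 1)) :=
          (ENNReal.ofReal_mul (Real.rpow_nonneg (pow_pos hP0 _).le _)).symm
      _ = ENNReal.ofReal ((P * a ^ k) * a ^ n) := by
          rw [rpow_pow_calc hP0 α (k + n)]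
          congr 1
          rw [← ha_def, pow_add]
          ring
  calc ∑' n, ∫⁻ y in A n, ENNReal.ofReal (‖y‖ ^ (-(1 + α))) ∂m
      ≤ ∑' n, ENNReal.ofReal ((P * a ^ k) * a ^ n) := ENNReal.tsum_le_tsum hterm
    _ = ENNReal.ofReal (∑' n, (P * a ^ k) * a ^ n) := by
        rw [ENNReal.ofReal_tsum_of_nonneg]
        · intro n; positivity
        · exact (summable_geometric_of_lt_one ha0.le ha1).mul_left _
    _ = ENNReal.ofReal (P / (1 - a) * a ^ k) := by
        rw [tsum_mul_left, tsum_geometric_of_lt_one ha0.le ha1]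
        congr 1
        ring

/-- Absence of a coupling threshold: if `0 < β < α < 1` and
`V(x) = (‖x‖_p + 1)^{-β}`, then for every `λ > 0` the Schrödinger form
`Q_α - λ ∫ V φ²` takes a negative value at some locally constant compactly
supported test function `φ`. -/
theorem no_coupling_threshold (p : ℕ) [Fact p.Prime]
    [MeasurableSpace ℚ_[p]] [BorelSpace ℚ_[p]] (m : Measure ℚ_[p])
    (hm : ∀ (x : ℚ_[p]) (k : ℤ),
      m (Metric.closedBall x ((p : ℝ) ^ k)) = ENNReal.ofReal ((p : ℝ) ^ k))
    (α β : ℝ) (hβ0 : 0 < β) (hβα : β < α) (hα1 : α < 1)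
    (V : ℚ_[p] → ℝ) (hV : V = fun x => (‖x‖ + 1) ^ (-β))
    (lam : ℝ) (hlam : 0 < lam) :
    ∃ φ : ℚ_[p] → ℝ, IsLocallyConstant φ ∧ HasCompactSupport φ ∧
      Qform p m α φ - lam * ∫ x : ℚ_[p], V x * φ x ^ 2 ∂m < 0 := by
  have hα0 : 0 < α := hβ0.trans hβα
  haveI : SigmaFinite m := padic_sigmaFinite m hm
  set P : ℝ := (p : ℝ) with hP_def
  have hP : (1 : ℝ) < P := Nat.one_lt_cast.mpr (Fact.out (p := p.Prime)).one_lt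
  have hP0 : (0 : ℝ) < P := lt_trans one_pos hP
  set a : ℝ := P ^ (-α) with ha_def
  have ha0 : 0 < a := Real.rpow_pos_of_pos hP0 _
  have ha1 : a < 1 := Real.rpow_lt_one_of_one_lt_of_neg hP (by linarith)
  set b : ℝ := P ^ (-β) with hb_def
  have hb0 : 0 < b := Real.rpow_pos_of_pos hP0 _
  set c1 : ℝ := P / (1 - a) with hc1_def
  have hc1 : 0 < c1 := div_pos hP0 (by linarith)
  -- the coefficient in front of the Dirichlet form is positive
  have hg : gammaP p (-α) < 0 := by
    rw [gammaP]
    apply div_neg_of_pos_of_neg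
    · have : P ^ (-α - 1) < 1 := Real.rpow_lt_one_of_one_lt_of_neg hP (by linarith)
      linarith
    · have : 1 < P ^ (-(-α)) := by
        rw [neg_neg]
        exact (Real.one_lt_rpow_iff_of_pos hP0).mpr (Or.inl ⟨hP, hα0⟩)
      linarith
  set c : ℝ := -(1 / (2 * gammaP p (-α))) with hc_def
  have hc : 0 < c := by
    have h1 : 1 / (2 * gammaP p (-α)) < 0 := div_neg_of_pos_of_neg one_pos (by linarith)
    rw [hc_def]; linarith
  -- choose the radius exponent k
  set r : ℝ := P ^ (α - β) with hr_def
  have hr : 1 < r := (Real.one_lt_rpow_iff_of_pos hP0).mpr (Or.inl ⟨hP, by linarith⟩)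
  obtain ⟨k, hk⟩ := pow_unbounded_of_one_lt ((2 : ℝ) ^ β * (c * (2 * c1)) / lam) hr
  -- the test function: indicator of the ball of radius p^k
  set B : ℕ → Set ℚ_[p] := fun j => Metric.closedBall 0 (P ^ j) with hB_def
  have hmB : ∀ j, m (B j) = ENNReal.ofReal (P ^ j) := by
    intro j
    have := hm 0 (j : ℤ)
    rwa [zpow_natCast] at this
  have hBmeas : ∀ j, MeasurableSet (B j) := fun j => measurableSet_closedBall
  have hmemB : ∀ (j : ℕ) (y : ℚ_[p]), y ∈ B j ↔ ‖y‖ ≤ P ^ j := by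
    intro j y; rw [hB_def]; exact mem_closedBall_zero_iff
  set φ : ℚ_[p] → ℝ := Set.indicator (B k) (fun _ => (1 : ℝ)) with hφ_def
  have hφ1 : ∀ x ∈ B k, φ x = 1 := fun x hx => Set.indicator_of_mem hx _
  have hφ0 : ∀ x ∉ B k, φ x = 0 := fun x hx => Set.indicator_of_notMem hx _
  have hclopen : IsClopen (B k) :=
    IsUltrametricDist.isClopen_closedBall 0 (ne_of_gt (pow_pos hP0 k))
  refine ⟨φ, ?_, ?_, ?_⟩
  · -- locally constant
    classical
    intro s
    have hpre : φ ⁻¹' s =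
        (if (1 : ℝ) ∈ s then B k else ∅) ∪ (if (0 : ℝ) ∈ s then (B k)ᶜ else ∅) := by
      ext x
      by_cases hx : x ∈ B k <;> by_cases h1 : (1 : ℝ) ∈ s <;> by_cases h0 : (0 : ℝ) ∈ s <;>
        simp [hφ_def, Set.indicator, hx, h1, h0]
    rw [hpre]
    apply IsOpen.union
    · split
      · exact hclopen.2
      · exact isOpen_empty
    · split
      · exact hclopen.1.isOpen_compl
      · exact isOpen_empty
  · -- compact support
    exact HasCompactSupport.intro (isCompact_closedBall 0 (P ^ k)) hφ0
  · -- negativity of the Schrödinger form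
    -- potential part
    have hmeasφ : Measurable φ := measurable_const.indicator (hBmeas k)
    have hVcont : Continuous V := by
      rw [hV]
      exact (continuous_norm.add continuous_const).rpow_const
        (fun x => Or.inl (ne_of_gt (show (0:ℝ) < ‖x‖ + 1 by positivity)))
    have hV1 : ∀ x, V x ≤ 1 := by
      intro x; simp only [hV]
      exact Real.rpow_le_one_of_one_le_of_nonpos (by
        have := norm_nonneg x; linarith) (by linarith)
    have hV0 : ∀ x, 0 ≤ V x := by
      intro x; rw [hV]; positivity
    have hVφeq : (fun x => V x * φ x ^ 2) = Set.indicator (B k) V := by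
      funext x
      by_cases hx : x ∈ B k
      · rw [hφ1 x hx, Set.indicator_of_mem hx]; ring
      · rw [hφ0 x hx, Set.indicator_of_notMem hx]; ring
    have hmBfin : m (B k) < ⊤ := by rw [hmB]; exact ENNReal.ofReal_lt_top
    have hIntV : IntegrableOn V (B k) m := by
      refine Integrable.mono' (g := fun _ => (1 : ℝ))
        (integrableOn_const (C := (1:ℝ)) hmBfin.ne)
        hVcont.aestronglyMeasurable.restrict ?_
      refine Filter.Eventually.of_forall fun x => ?_
      rw [Real.norm_eq_abs, abs_of_nonneg (hV0 x)]
      exact hV1 x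
    have hPotEq : ∫ x, V x * φ x ^ 2 ∂m = ∫ x in B k, V x ∂m := by
      rw [hVφeq, integral_indicator (hBmeas k)]
    set vk : ℝ := (P ^ k + 1) ^ (-β) with hvk_def
    have hPk : (0 : ℝ) < P ^ k := pow_pos hP0 k
    have hPk1 : (1 : ℝ) ≤ P ^ k := one_le_pow₀ hP.le
    have hvk0 : 0 < vk := Real.rpow_pos_of_pos (by positivity) _
    have hVlower : ∀ x ∈ B k, vk ≤ V x := by
      intro x hx
      simp only [hV, hvk_def]
      refine Real.rpow_le_rpow_of_nonpos (by positivity) ?_ (by linarith)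
      have := (hmemB k x).mp hx
      linarith
    have hPotLB : vk * P ^ k ≤ ∫ x in B k, V x ∂m := by
      have h1 : ∫ _ in B k, vk ∂m = (m (B k)).toReal • vk := setIntegral_const vk
      have h2 : (m (B k)).toReal = P ^ k := by
        rw [hmB, ENNReal.toReal_ofReal (by positivity)]
      have h3 := setIntegral_mono_on
        (integrableOn_const (C := vk) hmBfin.ne) hIntV (hBmeas k) hVlower
      rw [h1, h2, smul_eq_mul, mul_comm] at h3
      exact h3
    -- kernel measurability
    have hrpowMeas : Measurable (fun t : ℝ => t ^ (-(1 + α))) := by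
      apply measurable_of_continuousOn_compl_singleton (0 : ℝ)
      exact ContinuousOn.rpow_const continuousOn_id (fun x hx => Or.inl hx)
    set K : ℚ_[p] × ℚ_[p] → ℝ :=
      fun q => (φ q.1 - φ q.2) ^ 2 * ‖q.1 - q.2‖ ^ (-(1 + α)) with hK_def
    have hKmeas : Measurable K := by
      apply Measurable.mul
      · exact ((hmeasφ.comp measurable_fst).sub (hmeasφ.comp measurable_snd)).pow_const 2
      · exact hrpowMeas.comp ((measurable_fst.sub measurable_snd).norm)
    have hKnonneg : ∀ q, 0 ≤ K q := fun q =>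
      mul_nonneg (sq_nonneg _) (Real.rpow_nonneg (norm_nonneg _) _)
    set G : ℚ_[p] × ℚ_[p] → ENNReal := fun q => ENNReal.ofReal (K q) with hG_def
    have hGmeas : Measurable G := ENNReal.measurable_ofReal.comp hKmeas
    have htail : ∫⁻ y in (B k)ᶜ, ENNReal.ofReal (‖y‖ ^ (-(1 + α))) ∂m
        ≤ ENNReal.ofReal (c1 * a ^ k) :=
      padic_tail_bound m hm hα0 k
    -- inner integral bounds
    have hinner1 : ∀ x ∈ B k, ∫⁻ y, G (x, y) ∂m ≤ ENNReal.ofReal (c1 * a ^ k) := by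
      intro x hx
      have heq : (fun y => G (x, y)) =
          Set.indicator ((B k)ᶜ) (fun y => ENNReal.ofReal (‖y‖ ^ (-(1 + α)))) := by
        funext y
        by_cases hy : y ∈ B k
        · rw [Set.indicator_of_notMem (by simpa using hy)]
          simp [hG_def, hK_def, hφ1 x hx, hφ1 y hy]
        · have hy' : P ^ k < ‖y‖ := not_le.mp (fun h => hy ((hmemB k y).mpr h))
          have hxy : ‖x - y‖ = ‖y‖ :=
            padic_norm_sub_eq_right (lt_of_le_of_lt ((hmemB k x).mp hx) hy')
          rw [Set.indicator_of_mem (Set.mem_compl hy)]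
          simp [hG_def, hK_def, hφ1 x hx, hφ0 y hy, hxy]
      rw [heq, lintegral_indicator (hBmeas k).compl]
      exact htail
    have hinner2 : ∀ x ∉ B k, ∫⁻ y, G (x, y) ∂m =
        ENNReal.ofReal (‖x‖ ^ (-(1 + α))) * ENNReal.ofReal (P ^ k) := by
      intro x hx
      have hx' : P ^ k < ‖x‖ := not_le.mp (fun h => hx ((hmemB k x).mpr h))
      have heq : (fun y => G (x, y)) =
          Set.indicator (B k) (fun _ => ENNReal.ofReal (‖x‖ ^ (-(1 + α)))) := by
        funext y
        by_cases hy : y ∈ B k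
        · have hxy : ‖x - y‖ = ‖x‖ :=
            padic_norm_sub_eq_left (lt_of_le_of_lt ((hmemB k y).mp hy) hx')
          rw [Set.indicator_of_mem hy]
          simp [hG_def, hK_def, hφ0 x hx, hφ1 y hy, hxy]
        · rw [Set.indicator_of_notMem hy]
          simp [hG_def, hK_def, hφ0 x hx, hφ0 y hy]
      rw [heq, lintegral_indicator (hBmeas k), setLIntegral_const, hmB]
    -- assembling the bound on the double integral
    set D : ℝ := 2 * c1 * a ^ k * P ^ k with hD_def
    have hD0 : 0 ≤ D := by positivity
    have hL : ∫⁻ q, G q ∂(m.prod m) ≤ ENNReal.ofReal D := by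
      rw [MeasureTheory.lintegral_prod _ hGmeas.aemeasurable]
      rw [← lintegral_add_compl (fun x => ∫⁻ y, G (x, y) ∂m) (hBmeas k)]
      have hpart1 : ∫⁻ x in B k, (∫⁻ y, G (x, y) ∂m) ∂m
          ≤ ENNReal.ofReal (c1 * a ^ k * P ^ k) := by
        calc ∫⁻ x in B k, (∫⁻ y, G (x, y) ∂m) ∂m
            ≤ ∫⁻ _ in B k, ENNReal.ofReal (c1 * a ^ k) ∂m :=
              setLIntegral_mono measurable_const hinner1
          _ = ENNReal.ofReal (c1 * a ^ k) * m (B k) := setLIntegral_const _ _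
          _ = ENNReal.ofReal (c1 * a ^ k * P ^ k) := by
              rw [hmB, ← ENNReal.ofReal_mul (by positivity)]
      have hpart2 : ∫⁻ x in (B k)ᶜ, (∫⁻ y, G (x, y) ∂m) ∂m
          ≤ ENNReal.ofReal (c1 * a ^ k * P ^ k) := by
        have heq2 : ∫⁻ x in (B k)ᶜ, (∫⁻ y, G (x, y) ∂m) ∂m
            = ∫⁻ x in (B k)ᶜ,
                ENNReal.ofReal (‖x‖ ^ (-(1 + α))) * ENNReal.ofReal (P ^ k) ∂m :=
          setLIntegral_congr_fun (hBmeas k).compl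
            (fun x hx => hinner2 x (by simpa using hx))
        rw [heq2, lintegral_mul_const (ENNReal.ofReal (P ^ k))
          (f := fun x : ℚ_[p] => ENNReal.ofReal (‖x‖ ^ (-(1 + α))))
          (by exact ENNReal.measurable_ofReal.comp (hrpowMeas.comp measurable_norm))]
        calc (∫⁻ x in (B k)ᶜ, ENNReal.ofReal (‖x‖ ^ (-(1 + α))) ∂m) * ENNReal.ofReal (P ^ k)
            ≤ ENNReal.ofReal (c1 * a ^ k) * ENNReal.ofReal (P ^ k) := mul_le_mul_left htail _
          _ = ENNReal.ofReal (c1 * a ^ k * P ^ k) := by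
              rw [← ENNReal.ofReal_mul (by positivity)]
      refine le_trans (add_le_add hpart1 hpart2) ?_
      rw [← ENNReal.ofReal_add (by positivity) (by positivity)]
      apply ENNReal.ofReal_le_ofReal
      rw [hD_def]; linarith
    -- Bochner integral bound
    have hIeq : ∫ q, K q ∂(m.prod m) = (∫⁻ q, G q ∂(m.prod m)).toReal :=
      integral_eq_lintegral_of_nonneg_ae (Filter.Eventually.of_forall hKnonneg)
        hKmeas.aestronglyMeasurable
    have hIle : ∫ q, K q ∂(m.prod m) ≤ D := by
      rw [hIeq]; exact ENNReal.toReal_le_of_le_ofReal hD0 hL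
    have hQle : Qform p m α φ ≤ c * D := by
      have hQeq : Qform p m α φ = c * ∫ q, K q ∂(m.prod m) := rfl
      rw [hQeq]
      exact mul_le_mul_of_nonneg_left hIle hc.le
    -- final arithmetic
    have hak : (0 : ℝ) < a ^ k := pow_pos ha0 k
    have h2mβ : (0 : ℝ) < (2 : ℝ) ^ (-β) := Real.rpow_pos_of_pos two_pos _
    have h2cancel : (2 : ℝ) ^ (-β) * (2 : ℝ) ^ β = 1 := by
      rw [← Real.rpow_add two_pos]; simp
    have hbk : b ^ k = r ^ k * a ^ k := by
      rw [← mul_pow]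
      congr 1
      rw [hb_def, hr_def, ha_def, ← Real.rpow_add hP0]
      congr 1
      ring
    have hkey : c * (2 * c1) < lam * (2 : ℝ) ^ (-β) * r ^ k := by
      have h1 : (2 : ℝ) ^ β * (c * (2 * c1)) < lam * r ^ k := by
        have := (div_lt_iff₀ hlam).mp hk
        linarith
      calc c * (2 * c1) = (2 : ℝ) ^ (-β) * ((2 : ℝ) ^ β * (c * (2 * c1))) := by
            linear_combination (-(c * (2 * c1))) * h2cancel
        _ < (2 : ℝ) ^ (-β) * (lam * r ^ k) := mul_lt_mul_of_pos_left h1 h2mβ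
        _ = lam * (2 : ℝ) ^ (-β) * r ^ k := by ring
    have hvklow : (2 : ℝ) ^ (-β) * b ^ k ≤ vk := by
      rw [hvk_def]
      have h1 : ((2 : ℝ) * P ^ k) ^ (-β) = (2 : ℝ) ^ (-β) * (P ^ k) ^ (-β) :=
        Real.mul_rpow (by norm_num) hPk.le
      have h2 : ((P : ℝ) ^ k) ^ (-β) = b ^ k := rpow_pow_calc2 hP0 β k
      have h3 : ((2 : ℝ) * P ^ k) ^ (-β) ≤ (P ^ k + 1) ^ (-β) :=
        Real.rpow_le_rpow_of_nonpos (by positivity) (by linarith) (by linarith)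
      calc (2 : ℝ) ^ (-β) * b ^ k = ((2 : ℝ) * P ^ k) ^ (-β) := by rw [h1, h2]
        _ ≤ (P ^ k + 1) ^ (-β) := h3
    have hfinal : c * D < lam * (vk * P ^ k) := by
      calc c * D = (c * (2 * c1)) * (a ^ k * P ^ k) := by rw [hD_def]; ring
        _ < (lam * (2 : ℝ) ^ (-β) * r ^ k) * (a ^ k * P ^ k) :=
            mul_lt_mul_of_pos_right hkey (by positivity)
        _ = lam * (((2 : ℝ) ^ (-β) * (r ^ k * a ^ k)) * P ^ k) := by ring
        _ = lam * (((2 : ℝ) ^ (-β) * b ^ k) * P ^ k) := by rw [hbk]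
        _ ≤ lam * (vk * P ^ k) := by
            refine mul_le_mul_of_nonneg_left ?_ hlam.le
            exact mul_le_mul_of_nonneg_right hvklow hPk.le
    have hPot : lam * (vk * P ^ k) ≤ lam * ∫ x, V x * φ x ^ 2 ∂m := by
      refine mul_le_mul_of_nonneg_left ?_ hlam.le
      rw [hPotEq]
      exact hPotLB
    linarith [hQle, hfinal, hPot]
end

section
/- Let p be a prime, α > 0, and let V : ℚ_p → ℝ be measurable and locally integrable. Suppose there is a nonempty open set U ⊆ ℚ_p with V(x) < 0 for m-almost every x ∈ U. For λ ≥ 0 define E_λ := inf { Q_α(u) + λ ∫_{ℚ_p} V u² dm : u locally constant with compact support, ∫_{ℚ_p} u² dm = 1 }. Then E_λ → −∞ as λ → ∞. -/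
open MeasureTheory

/-- The indicator of a clopen set with a constant value is locally constant. -/
lemma isLocallyConstant_indicator_const {X : Type*} [TopologicalSpace X]
    {s : Set X} (hs : IsClopen s) (c : ℝ) :
    IsLocallyConstant (s.indicator fun _ => c) := by
  intro t
  classical
  by_cases hc : c ∈ t <;> by_cases h0 : (0 : ℝ) ∈ t
  · convert isOpen_univ
    ext x
    simp only [Set.mem_preimage, Set.indicator]
    split_ifs <;> simp [hc, h0]
  · convert hs.isOpen
    ext x
    simp only [Set.mem_preimage, Set.indicator]
    split_ifs with h <;> simp [hc, h0, h]
  · convert hs.compl.isOpen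
    ext x
    simp only [Set.mem_preimage, Set.indicator, Set.mem_compl_iff]
    split_ifs with h <;> simp [hc, h0, h]
  · convert isOpen_empty
    ext x
    simp only [Set.mem_preimage, Set.indicator]
    split_ifs <;> simp [hc, h0]

/-- If the locally integrable potential `V` is negative a.e. on some nonempty open set,
then the bottom of the spectrum `E_λ` of `𝔇^α + λV` tends to `-∞` as `λ → ∞`:
for every `M` there is `Λ` such that for all `λ ≥ Λ` some normalized locally constant
compactly supported `u` satisfies `Q_α(u) + λ ∫ V u² dm < M`. -/
theorem bottom_of_spectrum_tendsto_neg_infty (p : ℕ) [Fact p.Prime]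
    [MeasurableSpace ℚ_[p]] [BorelSpace ℚ_[p]] (m : Measure ℚ_[p])
    (hm : ∀ (x : ℚ_[p]) (k : ℤ),
      m (Metric.closedBall x ((p : ℝ) ^ k)) = ENNReal.ofReal ((p : ℝ) ^ k))
    (α : ℝ) (hα : 0 < α)
    (V : ℚ_[p] → ℝ) (hVmeas : Measurable V) (hVloc : LocallyIntegrable V m)
    (U : Set ℚ_[p]) (hUopen : IsOpen U) (hUne : U.Nonempty)
    (hVU : ∀ᵐ x ∂m, x ∈ U → V x < 0) :
    ∀ M : ℝ, ∃ Λ : ℝ, ∀ lam : ℝ, Λ ≤ lam →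
      ∃ u : ℚ_[p] → ℝ, IsLocallyConstant u ∧ HasCompactSupport u ∧
        (∫ x : ℚ_[p], u x ^ 2 ∂m) = 1 ∧
        Qform p m α u + lam * ∫ x : ℚ_[p], V x * u x ^ 2 ∂m < M := by
  intro M
  have hp1 : (1 : ℝ) < (p : ℝ) := by
    exact_mod_cast (Fact.out : p.Prime).one_lt
  have hp0 : (0 : ℝ) < (p : ℝ) := lt_trans one_pos hp1
  -- choose a small closed ball inside U
  obtain ⟨x₀, hx₀⟩ := hUne
  obtain ⟨ε, hε, hball⟩ := Metric.isOpen_iff.1 hUopen x₀ hx₀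
  obtain ⟨n, hn⟩ := exists_pow_lt_of_lt_one hε (by
    rw [inv_lt_one_iff₀]; right; exact hp1 : (p : ℝ)⁻¹ < 1)
  set k : ℤ := -(n : ℤ) with hk
  have hpk : (0 : ℝ) < (p : ℝ) ^ k := zpow_pos hp0 k
  have hpkε : (p : ℝ) ^ k < ε := by
    rwa [hk, zpow_neg, zpow_natCast, ← inv_pow]
  set B : Set ℚ_[p] := Metric.closedBall x₀ ((p : ℝ) ^ k) with hB
  have hBU : B ⊆ U := fun x hx =>
    hball (lt_of_le_of_lt (Metric.mem_closedBall.1 hx) hpkε)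
  have hBclopen : IsClopen B := IsUltrametricDist.isClopen_closedBall x₀ (ne_of_gt hpk)
  have hBmeas : MeasurableSet B := hBclopen.2.measurableSet
  have hBcompact : IsCompact B := isCompact_closedBall x₀ _
  have hmB : m B = ENNReal.ofReal ((p : ℝ) ^ k) := hm x₀ k
  have hmB0 : m B ≠ 0 := by rw [hmB]; simpa using hpk
  -- the normalized indicator
  set c : ℝ := Real.sqrt (((p : ℝ) ^ k)⁻¹) with hc
  have hc2 : c ^ 2 = ((p : ℝ) ^ k)⁻¹ := Real.sq_sqrt (by positivity)
  set u : ℚ_[p] → ℝ := B.indicator fun _ => c with hu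
  have hlc : IsLocallyConstant u := isLocallyConstant_indicator_const hBclopen c
  have hcs : HasCompactSupport u :=
    HasCompactSupport.intro hBcompact fun x hx => Set.indicator_of_notMem hx _
  have husq : ∀ x, u x ^ 2 = B.indicator (fun _ => c ^ 2) x := by
    intro x
    by_cases hx : x ∈ B <;> simp [hu, Set.indicator, hx]
  have hnorm : (∫ x : ℚ_[p], u x ^ 2 ∂m) = 1 := by
    simp only [husq]
    rw [integral_indicator_const _ hBmeas, Measure.real, hmB, smul_eq_mul,
      ENNReal.toReal_ofReal hpk.le, hc2]
    field_simp
  -- the potential integral is negative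
  have hVB : IntegrableOn V B m := hVloc.integrableOn_isCompact hBcompact
  have hIneg : (∫ x in B, V x ∂m) < 0 := by
    have hpos : 0 < ∫ x in B, (-V x) ∂m := by
      rw [setIntegral_pos_iff_support_of_nonneg_ae]
      · -- 0 < m (support (-V) ∩ B)
        have hnull : m (B \ Function.support (fun x => -V x)) = 0 := by
          refine measure_mono_null ?_ (ae_iff.1 hVU)
          intro x hx
          simp only [Set.mem_diff, Function.mem_support, not_not, neg_eq_zero] at hx
          simp only [Set.mem_setOf_eq, Classical.not_imp, not_lt]
          exact ⟨hBU hx.1, le_of_eq hx.2.symm⟩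
        by_contra hcon
        push_neg at hcon
        have hcon0 : m (Function.support (fun x => -V x) ∩ B) = 0 := le_antisymm hcon zero_le
        apply hmB0
        refine le_antisymm ?_ zero_le
        calc m B ≤ m ((Function.support (fun x => -V x) ∩ B) ∪
              (B \ Function.support (fun x => -V x))) := by
              refine measure_mono fun x hx => ?_
              by_cases h : x ∈ Function.support (fun x => -V x)
              · exact Or.inl ⟨h, hx⟩
              · exact Or.inr ⟨hx, h⟩
          _ ≤ 0 := by
              refine le_trans (measure_union_le _ _) ?_
              rw [hcon0, hnull]; simp
      · -- a.e. nonneg on B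
        rw [Filter.EventuallyLE, ae_restrict_iff' hBmeas]
        filter_upwards [hVU] with x hx hxB
        simpa using (hx (hBU hxB)).le
      · exact hVB.neg
    have := hpos
    rwa [integral_neg, neg_pos] at this
  set I : ℝ := ∫ x : ℚ_[p], V x * u x ^ 2 ∂m with hI
  have hIeq : I = c ^ 2 * ∫ x in B, V x ∂m := by
    have : ∀ x, V x * u x ^ 2 = B.indicator (fun x => V x * c ^ 2) x := by
      intro x
      by_cases hx : x ∈ B <;> simp [hu, Set.indicator, hx]
    rw [hI]
    simp only [this]
    rw [integral_indicator hBmeas, integral_mul_const, mul_comm]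
  have hIneg' : I < 0 := by
    rw [hIeq]
    have hc2pos : 0 < c ^ 2 := by rw [hc2]; positivity
    exact mul_neg_of_pos_of_neg hc2pos hIneg
  -- choose Λ
  set Q₀ : ℝ := Qform p m α u with hQ
  refine ⟨(Q₀ - M + 1) / (-I), fun lam hlam => ⟨u, hlc, hcs, hnorm, ?_⟩⟩
  have hI0 : I ≠ 0 := ne_of_lt hIneg'
  have h1 : lam * I ≤ ((Q₀ - M + 1) / (-I)) * I :=
    mul_le_mul_of_nonpos_right hlam hIneg'.le
  have h2 : ((Q₀ - M + 1) / (-I)) * I = -(Q₀ - M + 1) := by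
    rw [div_mul_eq_mul_div, mul_div_assoc, div_neg, div_self hI0]
    ring
  calc Q₀ + lam * I ≤ Q₀ + ((Q₀ - M + 1) / (-I)) * I := by linarith
    _ = M - 1 := by rw [h2]; ring
    _ < M := by linarith
end

section
/- Let p ≥ 2 be an integer, 0 < κ < 1, and let X = [0,∞) with Lebesgue measure l. For r ∈ ℤ and x ∈ X let I_r(x) denote the unique p-adic interval [k p^r, (k+1) p^r) (k a non-negative integer) containing x. Fix r ∈ ℤ, a p-adic interval I of rank r, and a p-adic subinterval I_i ⊂ I of rank r−1, and set ψ := p^{−(r−1)} 1_{I_i} − p^{−r} 1_I. Then for every x ∈ [0,∞) the series (Lψ)(x) := Σ_{s ∈ ℤ} (1−κ) κ^{s−1} ( ψ(x) − p^{−s} ∫_{I_s(x)} ψ dl ) converges absolutely and (Lψ)(x) = κ^{r−1} ψ(x); i.e. ψ is an eigenfunction of the Dyson hierarchical Laplacian with eigenvalue κ^{r−1}. -/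
open MeasureTheory

/-- The `p`-adic interval of rank `r` containing `x`:
`I_r(x) = [k p^r, (k+1) p^r)` with `k = ⌊x / p^r⌋`. -/
noncomputable def padicInterval (p : ℕ) (r : ℤ) (x : ℝ) : Set ℝ :=
  Set.Ico ((⌊x / (p : ℝ) ^ r⌋ : ℝ) * (p : ℝ) ^ r)
    (((⌊x / (p : ℝ) ^ r⌋ : ℝ) + 1) * (p : ℝ) ^ r)



private lemma floorDivNat (a : ℝ) {n : ℕ} (hn : 0 < n) : ⌊a / (n : ℝ)⌋ = ⌊a⌋ / (n : ℤ) := by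
  have hn' : (0:ℝ) < (n:ℝ) := by exact_mod_cast hn
  have hnz : (0:ℤ) < (n:ℤ) := by exact_mod_cast hn
  have hdm := Int.mul_ediv_add_emod ⌊a⌋ (n:ℤ)
  have hm0 : 0 ≤ ⌊a⌋ % (n:ℤ) := Int.emod_nonneg _ (by omega)
  have hm1 : ⌊a⌋ % (n:ℤ) < n := Int.emod_lt_of_pos _ hnz
  rw [Int.floor_eq_iff]
  constructor
  · rw [le_div_iff₀ hn']
    have h1 : ((⌊a⌋ / (n:ℤ) * (n:ℤ) : ℤ) : ℝ) ≤ (⌊a⌋ : ℝ) := by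
      exact_mod_cast (by nlinarith [hdm, hm0] : ⌊a⌋ / (n:ℤ) * (n:ℤ) ≤ ⌊a⌋)
    calc ((⌊a⌋ / (n:ℤ) : ℤ) : ℝ) * (n:ℝ) = ((⌊a⌋ / (n:ℤ) * (n:ℤ) : ℤ) : ℝ) := by push_cast; ring
      _ ≤ (⌊a⌋ : ℝ) := h1
      _ ≤ a := Int.floor_le a
  · rw [div_lt_iff₀ hn']
    have h2 : (⌊a⌋ : ℤ) + 1 ≤ (⌊a⌋ / (n:ℤ) + 1) * (n:ℤ) := by nlinarith [hdm, hm1]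
    have h2' : ((⌊a⌋ : ℝ) + 1) ≤ (((⌊a⌋ / (n:ℤ) : ℤ) : ℝ) + 1) * (n:ℝ) := by
      exact_mod_cast h2
    calc a < (⌊a⌋ : ℝ) + 1 := Int.lt_floor_add_one a
      _ ≤ (((⌊a⌋ / (n:ℤ) : ℤ) : ℝ) + 1) * (n:ℝ) := h2'

private lemma floorRankMono {p : ℕ} (hp : 2 ≤ p) {s t : ℤ} (hst : s ≤ t) {x y : ℝ}
    (h : ⌊x / (p:ℝ) ^ s⌋ = ⌊y / (p:ℝ) ^ s⌋) : ⌊x / (p:ℝ) ^ t⌋ = ⌊y / (p:ℝ) ^ t⌋ := by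
  have hp0 : (0:ℝ) < (p:ℝ) := by exact_mod_cast (by omega : 0 < p)
  obtain ⟨n, rfl⟩ : ∃ n : ℕ, t = s + (n:ℤ) := ⟨(t - s).toNat, by omega⟩
  have key : ∀ z : ℝ, ⌊z / (p:ℝ) ^ (s + (n:ℤ))⌋ = ⌊z / (p:ℝ) ^ s⌋ / ((p ^ n : ℕ) : ℤ) := by
    intro z
    rw [zpow_add₀ (ne_of_gt hp0), ← div_div,
      show ((p:ℝ) ^ (n:ℤ)) = ((p ^ n : ℕ) : ℝ) by push_cast [zpow_natCast]; ring]
    exact floorDivNat _ (pow_pos (by omega) n)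
  rw [key x, key y, h]

private lemma memIcoIffFloor {w : ℝ} (hw : 0 < w) (m : ℤ) (z : ℝ) :
    z ∈ Set.Ico ((m:ℝ) * w) (((m:ℝ) + 1) * w) ↔ ⌊z / w⌋ = m := by
  rw [Set.mem_Ico, Int.floor_eq_iff, le_div_iff₀ hw, div_lt_iff₀ hw]

/-- Eigenfunctions of the Dyson hierarchical Laplacian: if `I` is a `p`-adic interval
of rank `r`, `Ii ⊆ I` a `p`-adic subinterval of rank `r-1`, and
`ψ = p^{-(r-1)} 1_{Ii} - p^{-r} 1_I`, then for every `x ∈ [0,∞)` the series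
`(Lψ)(x) = Σ_{s∈ℤ} (1-κ) κ^{s-1} (ψ(x) - p^{-s} ∫_{I_s(x)} ψ dl)` converges
absolutely and equals `κ^{r-1} ψ(x)`. -/
theorem dyson_laplacian_eigenfunction (p : ℕ) (hp : 2 ≤ p) (κ : ℝ)
    (hκ0 : 0 < κ) (hκ1 : κ < 1) (r : ℤ) (k k' : ℕ)
    (I Ii : Set ℝ)
    (hI : I = Set.Ico ((k : ℝ) * (p : ℝ) ^ r) (((k : ℝ) + 1) * (p : ℝ) ^ r))
    (hIi : Ii = Set.Ico ((k' : ℝ) * (p : ℝ) ^ (r - 1))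
      (((k' : ℝ) + 1) * (p : ℝ) ^ (r - 1)))
    (hsub : Ii ⊆ I)
    (ψ : ℝ → ℝ)
    (hψ : ψ = fun t => (p : ℝ) ^ (-(r - 1)) * Set.indicator Ii 1 t
      - (p : ℝ) ^ (-r) * Set.indicator I 1 t) :
    ∀ x : ℝ, 0 ≤ x →
      Summable (fun s : ℤ =>
        |(1 - κ) * κ ^ (s - 1) *
          (ψ x - (p : ℝ) ^ (-s) * ∫ t in padicInterval p s x, ψ t)|) ∧
      (∑' s : ℤ, (1 - κ) * κ ^ (s - 1) *
          (ψ x - (p : ℝ) ^ (-s) * ∫ t in padicInterval p s x, ψ t))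
        = κ ^ (r - 1) * ψ x := by
  intro x hx
  have hp0 : (0:ℝ) < (p:ℝ) := by exact_mod_cast (by omega : 0 < p)
  have hpne : (p:ℝ) ≠ 0 := ne_of_gt hp0
  set c : ℝ := (p:ℝ) with hc
  -- measurability and finiteness
  have hmI : MeasurableSet I := by rw [hI]; exact measurableSet_Ico
  have hmIi : MeasurableSet Ii := by rw [hIi]; exact measurableSet_Ico
  have hvI : volume I < ⊤ := by rw [hI]; exact measure_Ico_lt_top
  have hvIi : volume Ii < ⊤ := by rw [hIi]; exact measure_Ico_lt_top
  have hintI : Integrable (Set.indicator I (1:ℝ→ℝ)) := by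
    rw [integrable_indicator_iff hmI]
    exact (integrableOn_const_iff (C := (1:ℝ))).mpr (Or.inr hvI)
  have hintIi : Integrable (Set.indicator Ii (1:ℝ→ℝ)) := by
    rw [integrable_indicator_iff hmIi]
    exact (integrableOn_const_iff (C := (1:ℝ))).mpr (Or.inr hvIi)
  -- the integral of ψ over any measurable set
  have hint : ∀ A : Set ℝ, MeasurableSet A →
      (∫ t in A, ψ t) = c ^ (-(r-1)) * (volume (A ∩ Ii)).toReal
        - c ^ (-r) * (volume (A ∩ I)).toReal := by
    intro A hA
    rw [hψ]
    rw [integral_sub ((hintIi.const_mul _).integrableOn) ((hintI.const_mul _).integrableOn),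
      integral_const_mul, integral_const_mul, setIntegral_indicator hmIi,
      setIntegral_indicator hmI]
    simp [smul_eq_mul]
    rfl
  -- volumes of p-adic style intervals
  have hvol : ∀ (a : ℤ) (m : ℝ), (volume (Set.Ico (m * c ^ a) ((m + 1) * c ^ a))).toReal
      = c ^ a := by
    intro a m
    rw [Real.volume_Ico, show (m + 1) * c ^ a - m * c ^ a = c ^ a by ring]
    exact ENNReal.toReal_ofReal (by positivity)
  -- membership characterizations
  have hmemI : ∀ z : ℝ, z ∈ I ↔ ⌊z / c ^ r⌋ = (k:ℤ) := by
    intro z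
    rw [hI]
    have := memIcoIffFloor (show (0:ℝ) < c ^ r by positivity) (k:ℤ) z
    simpa using this
  have hmemIi : ∀ z : ℝ, z ∈ Ii ↔ ⌊z / c ^ (r-1)⌋ = (k':ℤ) := by
    intro z
    rw [hIi]
    have := memIcoIffFloor (show (0:ℝ) < c ^ (r-1) by positivity) (k':ℤ) z
    simpa using this
  have hmemIs : ∀ (s : ℤ) (z : ℝ), z ∈ padicInterval p s x ↔ ⌊z / c ^ s⌋ = ⌊x / c ^ s⌋ :=
    fun s z => memIcoIffFloor (show (0:ℝ) < c ^ s by positivity) _ z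
  have hmIs : ∀ s : ℤ, MeasurableSet (padicInterval p s x) :=
    fun s => measurableSet_Ico
  have hvolIs : ∀ s : ℤ, (volume (padicInterval p s x)).toReal = c ^ s :=
    fun s => hvol s _
  -- zpow cancellations
  have hz : ∀ a : ℤ, c ^ (-a) * c ^ a = 1 := by
    intro a; rw [← zpow_add₀ hpne, neg_add_cancel, zpow_zero]
  -- THE KEY CLAIM
  have claim : ∀ s : ℤ,
      ψ x - c ^ (-s) * ∫ t in padicInterval p s x, ψ t
        = if r ≤ s then ψ x else 0 := by
    intro s
    rcases le_or_gt r s with hrs | hrs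
    · -- high ranks: the integral vanishes
      rw [if_pos hrs]
      have hintval : (∫ t in padicInterval p s x, ψ t) = 0 := by
        rw [hint _ (hmIs s)]
        by_cases hne : (I ∩ padicInterval p s x).Nonempty
        · obtain ⟨y, hyI, hyIs⟩ := hne
          have hIsub : I ⊆ padicInterval p s x := by
            intro z hz'
            rw [hmemIs]
            have h1 : ⌊z / c ^ r⌋ = ⌊y / c ^ r⌋ := by
              rw [(hmemI z).mp hz', (hmemI y).mp hyI]
            have h2 := floorRankMono hp hrs h1
            rw [h2, (hmemIs s y).mp hyIs]
          have e1 : padicInterval p s x ∩ Ii = Ii :=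
            Set.inter_eq_self_of_subset_right (fun z hz' => hIsub (hsub hz'))
          have e2 : padicInterval p s x ∩ I = I :=
            Set.inter_eq_self_of_subset_right hIsub
          rw [e1, e2, hI, hIi, hvol, hvol, hz, hz]
          ring
        · have hempty : I ∩ padicInterval p s x = ∅ :=
            Set.not_nonempty_iff_eq_empty.mp hne
          have e2 : padicInterval p s x ∩ I = ∅ := by
            rw [Set.inter_comm]; exact hempty
          have e1 : padicInterval p s x ∩ Ii = ∅ := by
            apply Set.eq_empty_of_subset_empty
            intro z hz'
            rw [← e2]
            exact ⟨hz'.1, hsub hz'.2⟩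
          rw [e1, e2]
          simp
      rw [hintval, mul_zero, sub_zero]
    · -- low ranks
      rw [if_neg (not_le.mpr hrs)]
      have hs1 : s ≤ r - 1 := by omega
      have hsr : s ≤ r := by omega
      have hIs_sub1 : ∀ z ∈ padicInterval p s x, ⌊z / c ^ (r-1)⌋ = ⌊x / c ^ (r-1)⌋ := by
        intro z hz'
        exact floorRankMono hp hs1 ((hmemIs s z).mp hz')
      have hIs_sub2 : ∀ z ∈ padicInterval p s x, ⌊z / c ^ r⌋ = ⌊x / c ^ r⌋ := by
        intro z hz'
        exact floorRankMono hp hsr ((hmemIs s z).mp hz')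
      by_cases hxIi : x ∈ Ii
      · have hxI : x ∈ I := hsub hxIi
        have hs_Ii : padicInterval p s x ⊆ Ii := by
          intro z hz'
          rw [hmemIi, hIs_sub1 z hz', ← hmemIi]
          exact hxIi
        have hs_I : padicInterval p s x ⊆ I := fun z hz' => hsub (hs_Ii hz')
        have e1 : padicInterval p s x ∩ Ii = padicInterval p s x :=
          Set.inter_eq_self_of_subset_left hs_Ii
        have e2 : padicInterval p s x ∩ I = padicInterval p s x :=
          Set.inter_eq_self_of_subset_left hs_I
        rw [hint _ (hmIs s), e1, e2, hvolIs s, hψ]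
        simp only [Set.indicator_of_mem hxIi, Set.indicator_of_mem hxI, Pi.one_apply,
          mul_one]
        have h1 := hz s
        linear_combination (c ^ (-r) - c ^ (-(r-1))) * h1
      · by_cases hxI : x ∈ I
        · have hs_I : padicInterval p s x ⊆ I := by
            intro z hz'
            rw [hmemI, hIs_sub2 z hz', ← hmemI]
            exact hxI
          have e2 : padicInterval p s x ∩ I = padicInterval p s x :=
            Set.inter_eq_self_of_subset_left hs_I
          have e1 : padicInterval p s x ∩ Ii = ∅ := by
            apply Set.eq_empty_of_subset_empty
            rintro z ⟨hz1, hz2⟩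
            exact absurd ((hmemIi x).mpr (by rw [← hIs_sub1 z hz1, ← hmemIi]; exact hz2))
              hxIi
          rw [hint _ (hmIs s), e1, e2, hvolIs s, hψ]
          simp only [Set.indicator_of_notMem hxIi, Set.indicator_of_mem hxI,
            Pi.one_apply, mul_one, mul_zero, Set.inter_empty, measure_empty,
            ENNReal.toReal_zero]
          have h1 := hz s
          linear_combination (c ^ (-r)) * h1
        · have e2 : padicInterval p s x ∩ I = ∅ := by
            apply Set.eq_empty_of_subset_empty
            rintro z ⟨hz1, hz2⟩
            exact absurd ((hmemI x).mpr (by rw [← hIs_sub2 z hz1, ← hmemI]; exact hz2))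
              hxI
          have e1 : padicInterval p s x ∩ Ii = ∅ := by
            apply Set.eq_empty_of_subset_empty
            rintro z ⟨hz1, hz2⟩
            rw [← e2]
            exact ⟨hz1, hsub hz2⟩
          rw [hint _ (hmIs s), e1, e2, hψ]
          simp [Set.indicator_of_notMem hxIi, Set.indicator_of_notMem hxI]
  -- now the summation
  have hκne : κ ≠ 0 := ne_of_gt hκ0
  have hinj : Function.Injective (fun n : ℕ => r + (n:ℤ)) := by
    intro a b h
    simpa using h
  have hcomp : ∀ n : ℕ,
      (1 - κ) * κ ^ (r + (n:ℤ) - 1) * (if r ≤ r + (n:ℤ) then ψ x else 0)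
        = ((1 - κ) * κ ^ (r - 1) * ψ x) * κ ^ n := by
    intro n
    rw [if_pos (by omega), show r + (n:ℤ) - 1 = (r - 1) + (n:ℤ) by ring,
      zpow_add₀ hκne, zpow_natCast]
    ring
  have hzero : ∀ s : ℤ, s ∉ Set.range (fun n : ℕ => r + (n:ℤ)) →
      (1 - κ) * κ ^ (s - 1) * (if r ≤ s then ψ x else 0) = 0 := by
    intro s hs
    have : ¬ r ≤ s := by
      intro hle
      exact hs ⟨(s - r).toNat, by simp; omega⟩
    rw [if_neg this, mul_zero]
  constructor
  · simp only [claim]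
    apply (Function.Injective.summable_iff hinj ?_).mp
    · refine Summable.congr ((summable_geometric_of_lt_one hκ0.le hκ1).mul_left
        |(1 - κ) * κ ^ (r - 1) * ψ x|) ?_
      intro n
      show _ = |(1 - κ) * κ ^ (r + (n:ℤ) - 1) * (if r ≤ r + (n:ℤ) then ψ x else 0)|
      rw [hcomp n]
      simp [abs_mul, abs_of_nonneg (pow_nonneg hκ0.le n)]
    · intro s hs
      rw [hzero s hs, abs_zero]
  · simp only [claim]
    have hsupp : Function.support
        (fun s : ℤ => (1 - κ) * κ ^ (s - 1) * (if r ≤ s then ψ x else 0))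
        ⊆ Set.range (fun n : ℕ => r + (n:ℤ)) := by
      intro s hs
      by_contra hmem
      exact hs (hzero s hmem)
    rw [← Function.Injective.tsum_eq hinj hsupp]
    simp only [hcomp]
    rw [tsum_mul_left, tsum_geometric_of_lt_one hκ0.le hκ1]
    have h1κ : (1:ℝ) - κ ≠ 0 := by linarith
    field_simp
end
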